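/- arXiv:2106.10387 — 5 statements merged into one kernel-verified Lean document; each statement's English description precedes it below -/
import Mathlib

section
/- Fix an integer n ≥ 1 and for each h > 0 let K_h be a random variable with the beta-binomial distribution BB(n, cπ(h), c(1−π(h))). Then lim_{h→0+} h⁻¹·E[K_h] = n·r(t) and lim_{h→0+} h⁻¹·Var[K_h] = (1 + (n−1)/(c+1))·n·r(t). Consequently the infinitesimal dispersion index, defined as the ratio of these two limits, equals 1 + (n−1)/(c+1), which is strictly greater than 1 when n > 1 and equal to 1 when n = 1. -/
open scoped BigOperators
open Filter Topology

/-- The Beta function `B(a,b) = Γ(a)Γ(b)/Γ(a+b)`. -/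
noncomputable def betaFn (a b : ℝ) : ℝ := Real.Gamma a * Real.Gamma b / Real.Gamma (a + b)

/-- The pmf of the beta-binomial distribution `BB(n, α, β)`:
`P(K = k) = C(n,k) · B(k+α, n−k+β) / B(α,β)`. -/
noncomputable def bbPmf (n : ℕ) (α β : ℝ) (k : ℕ) : ℝ :=
  (n.choose k : ℝ) * betaFn ((k : ℝ) + α) ((n : ℝ) - (k : ℝ) + β) / betaFn α β

/-- `π(h) = 1 − exp(−∫_t^{t+h} r(s) ds)`. -/
noncomputable def pih (r : ℝ → ℝ) (t h : ℝ) : ℝ :=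
  1 - Real.exp (-(∫ s in t..(t + h), r s))

lemma betaFn_pos {a b : ℝ} (ha : 0 < a) (hb : 0 < b) : 0 < betaFn a b := by
  unfold betaFn
  exact div_pos (mul_pos (Real.Gamma_pos_of_pos ha) (Real.Gamma_pos_of_pos hb))
    (Real.Gamma_pos_of_pos (by linarith))

lemma betaFn_rec {a b : ℝ} (ha : 0 < a) (hb : 0 < b) :
    betaFn a b = betaFn (a+1) b + betaFn a (b+1) := by
  have hab : (0:ℝ) < a + b := by linarith
  have h1 : Real.Gamma (a+1) = a * Real.Gamma a := Real.Gamma_add_one ha.ne'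
  have h2 : Real.Gamma (b+1) = b * Real.Gamma b := Real.Gamma_add_one hb.ne'
  have h3 : Real.Gamma (a+b+1) = (a+b) * Real.Gamma (a+b) := Real.Gamma_add_one hab.ne'
  have e1 : a + 1 + b = a + b + 1 := by ring
  have e2 : a + (b+1) = a + b + 1 := by ring
  unfold betaFn
  rw [e1, e2, h1, h2, h3]
  have g3 : Real.Gamma (a+b) ≠ 0 := (Real.Gamma_pos_of_pos hab).ne'
  field_simp

lemma betaFn_succ_left {a b : ℝ} (ha : 0 < a) (hb : 0 < b) :
    betaFn (a+1) b = betaFn a b * (a / (a+b)) := by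
  have hab : (0:ℝ) < a + b := by linarith
  have h1 : Real.Gamma (a+1) = a * Real.Gamma a := Real.Gamma_add_one ha.ne'
  have h3 : Real.Gamma (a+b+1) = (a+b) * Real.Gamma (a+b) := Real.Gamma_add_one hab.ne'
  have e1 : a + 1 + b = a + b + 1 := by ring
  unfold betaFn
  rw [e1, h1, h3]
  have g3 : Real.Gamma (a+b) ≠ 0 := (Real.Gamma_pos_of_pos hab).ne'
  field_simp

lemma betaFn_sum (m : ℕ) : ∀ a b : ℝ, 0 < a → 0 < b →
    ∑ k ∈ Finset.range (m+1), (m.choose k : ℝ) * betaFn ((k:ℝ)+a) ((m:ℝ)-(k:ℝ)+b)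
      = betaFn a b := by
  induction m with
  | zero => intro a b ha hb; simp
  | succ m ih =>
    intro a b ha hb
    rw [Finset.sum_range_succ']
    push_cast
    have key : ∀ k ∈ Finset.range (m+1),
        (((m+1).choose (k+1) : ℝ)) * betaFn ((k:ℝ)+1+a) ((m:ℝ)+1-((k:ℝ)+1)+b)
        = ((m.choose k : ℝ) * betaFn ((k:ℝ)+(a+1)) ((m:ℝ)-(k:ℝ)+b))
          + ((m.choose (k+1) : ℝ) * betaFn ((k:ℝ)+1+a) ((m:ℝ)-((k:ℝ)+1)+(b+1))) := by
      intro k _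
      have hc : ((m+1).choose (k+1) : ℝ) = (m.choose k : ℝ) + (m.choose (k+1) : ℝ) := by
        rw [Nat.choose_succ_succ]; push_cast; ring
      have e1 : (k:ℝ) + 1 + a = (k:ℝ) + (a+1) := by ring
      have e2 : (m:ℝ) + 1 - ((k:ℝ)+1) + b = (m:ℝ) - (k:ℝ) + b := by ring
      have e3 : (m:ℝ) + 1 - ((k:ℝ)+1) + b = (m:ℝ) - ((k:ℝ)+1) + (b+1) := by ring
      rw [hc, add_mul]
      congr 1
      · rw [e1, e2]
      · rw [e3]
    have hgoalsum : ∑ k ∈ Finset.range (m+1),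
          (((m+1).choose (k+1) : ℝ)) * betaFn ((k:ℝ)+1+a) ((m:ℝ)+1-((k:ℝ)+1)+b)
        = betaFn (a+1) b +
          ∑ k ∈ Finset.range (m+1),
            (m.choose (k+1) : ℝ) * betaFn ((k:ℝ)+1+a) ((m:ℝ)-((k:ℝ)+1)+(b+1)) := by
      rw [Finset.sum_congr rfl key, Finset.sum_add_distrib, ih (a+1) b (by linarith) hb]
    have C : ∑ k ∈ Finset.range (m+2),
          (m.choose k : ℝ) * betaFn ((k:ℝ)+a) ((m:ℝ)-(k:ℝ)+(b+1))
        = betaFn a (b+1) := by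
      rw [Finset.sum_range_succ, Nat.choose_succ_self]
      simpa using ih a (b+1) ha (by linarith)
    rw [Finset.sum_range_succ'] at C
    push_cast at C hgoalsum ⊢
    have hrec := betaFn_rec ha hb
    have eq0 : betaFn (0+a) ((m:ℝ)+1-0+b) = betaFn (0+a) ((m:ℝ)-0+(b+1)) := by
      congr 1; ring
    rw [hgoalsum, eq0]
    simp only [Nat.choose_zero_right, Nat.cast_one, one_mul] at C ⊢
    linarith

lemma betaFn_sum_mean (n : ℕ) (a b : ℝ) (ha : 0 < a) (hb : 0 < b) :
    ∑ k ∈ Finset.range (n+1),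
        (k:ℝ) * ((n.choose k : ℝ) * betaFn ((k:ℝ)+a) ((n:ℝ)-(k:ℝ)+b))
      = (n:ℝ) * betaFn (a+1) b := by
  cases n with
  | zero => simp
  | succ m =>
    rw [Finset.sum_range_succ']
    push_cast
    have key : ∀ k ∈ Finset.range (m+1),
        ((k:ℝ)+1) * (((m+1).choose (k+1) : ℝ) * betaFn ((k:ℝ)+1+a) ((m:ℝ)+1-((k:ℝ)+1)+b))
        = ((m:ℝ)+1) * ((m.choose k : ℝ) * betaFn ((k:ℝ)+(a+1)) ((m:ℝ)-(k:ℝ)+b)) := by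
      intro k _
      have hc : ((m+1:ℕ)) * (m.choose k) = ((m+1).choose (k+1)) * (k+1) :=
        Nat.add_one_mul_choose_eq m k
      have hc' : ((m:ℝ)+1) * (m.choose k : ℝ) = ((m+1).choose (k+1) : ℝ) * ((k:ℝ)+1) := by
        exact_mod_cast congrArg (Nat.cast (R := ℝ)) hc
      have e1 : (k:ℝ) + 1 + a = (k:ℝ) + (a+1) := by ring
      have e2 : (m:ℝ) + 1 - ((k:ℝ)+1) + b = (m:ℝ) - (k:ℝ) + b := by ring
      rw [e1, e2]
      generalize betaFn ((k:ℝ) + (a+1)) ((m:ℝ) - (k:ℝ) + b) = B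
      linear_combination (-B) * hc'
    rw [Finset.sum_congr rfl key]
    rw [← Finset.mul_sum, betaFn_sum m (a+1) b (by linarith) hb]
    simp

lemma betaFn_sum_fact2 (n : ℕ) (a b : ℝ) (ha : 0 < a) (hb : 0 < b) :
    ∑ k ∈ Finset.range (n+1),
        (k:ℝ) * ((k:ℝ)-1) * ((n.choose k : ℝ) * betaFn ((k:ℝ)+a) ((n:ℝ)-(k:ℝ)+b))
      = (n:ℝ) * ((n:ℝ)-1) * betaFn (a+2) b := by
  match n with
  | 0 => simp
  | 1 => simp [Finset.sum_range_succ]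
  | (m+2) =>
    rw [Finset.sum_range_succ', Finset.sum_range_succ']
    push_cast
    have key : ∀ k ∈ Finset.range (m+1),
        ((k:ℝ)+1+1) * ((k:ℝ)+1+1-1) * (((m+2).choose (k+1+1) : ℝ)
            * betaFn ((k:ℝ)+1+1+a) ((m:ℝ)+2-((k:ℝ)+1+1)+b))
        = ((m:ℝ)+2) * ((m:ℝ)+1) * ((m.choose k : ℝ) * betaFn ((k:ℝ)+(a+2)) ((m:ℝ)-(k:ℝ)+b)) := by
      intro k _
      have hc1 : ((m+2:ℕ)) * ((m+1).choose (k+1)) = ((m+2).choose (k+2)) * (k+2) :=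
        Nat.add_one_mul_choose_eq (m+1) (k+1)
      have hc2 : ((m+1:ℕ)) * (m.choose k) = ((m+1).choose (k+1)) * (k+1) :=
        Nat.add_one_mul_choose_eq m k
      have hc1' : ((m:ℝ)+2) * (((m+1).choose (k+1) : ℝ)) = ((m+2).choose (k+2) : ℝ) * ((k:ℝ)+2) := by
        exact_mod_cast congrArg (Nat.cast (R := ℝ)) hc1
      have hc2' : ((m:ℝ)+1) * ((m.choose k : ℝ)) = ((m+1).choose (k+1) : ℝ) * ((k:ℝ)+1) := by
        exact_mod_cast congrArg (Nat.cast (R := ℝ)) hc2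
      have e1 : (k:ℝ) + 1 + 1 + a = (k:ℝ) + (a+2) := by ring
      have e2 : (m:ℝ) + 2 - ((k:ℝ)+1+1) + b = (m:ℝ) - (k:ℝ) + b := by ring
      rw [e1, e2]
      generalize betaFn ((k:ℝ) + (a+2)) ((m:ℝ) - (k:ℝ) + b) = B
      linear_combination (-B) * (((k:ℝ)+1) * hc1' + ((m:ℝ)+2) * hc2')
    rw [Finset.sum_congr rfl key]
    rw [← Finset.mul_sum, betaFn_sum m (a+2) b (by linarith) hb]
    push_cast
    ring

lemma pih_hasDerivAt (r : ℝ → ℝ) (hr_cont : Continuous r) (t : ℝ) :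
    HasDerivAt (fun h => pih r t h) (r t) 0 := by
  have hG : HasDerivAt (fun u => ∫ s in t..u, r s) (r t) t :=
    (hr_cont.integral_hasStrictDerivAt t t).hasDerivAt
  have hF : HasDerivAt (fun h : ℝ => ∫ s in t..(t+h), r s) (r t) 0 := by
    have hG' : HasDerivAt (fun u => ∫ s in t..u, r s) (r t) (t + id 0) := by
      simpa using hG
    have := hG'.comp (0:ℝ) ((hasDerivAt_id (0:ℝ)).const_add t)
    simpa [Function.comp_def] using this
  have hE : HasDerivAt (fun h : ℝ => Real.exp (-(∫ s in t..(t+h), r s)))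
      (Real.exp (-(∫ s in t..(t+0), r s)) * (-(r t))) 0 := (hF.neg).exp
  have h0 : (∫ s in t..(t+0), r s) = 0 := by simp
  have : HasDerivAt (fun h : ℝ => pih r t h)
      (0 - Real.exp (-(∫ s in t..(t+0), r s)) * (-(r t))) 0 :=
    (hasDerivAt_const _ _).sub hE
  simpa [h0] using this

lemma pih_zero (r : ℝ → ℝ) (t : ℝ) : pih r t 0 = 0 := by simp [pih]

lemma tendsto_pih_div (r : ℝ → ℝ) (hr_cont : Continuous r) (t : ℝ) :
    Tendsto (fun h : ℝ => h⁻¹ * pih r t h) (𝓝[>] (0:ℝ)) (𝓝 (r t)) := by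
  have h1 := (hasDerivAt_iff_tendsto_slope).mp (pih_hasDerivAt r hr_cont t)
  have h2 : Tendsto (slope (fun h => pih r t h) 0) (𝓝[>] (0:ℝ)) (𝓝 (r t)) :=
    h1.mono_left (nhdsWithin_mono _ (fun x hx => ne_of_gt hx))
  refine h2.congr (fun x => ?_)
  simp [slope, pih_zero, div_eq_inv_mul]

lemma tendsto_pih_zero (r : ℝ → ℝ) (hr_cont : Continuous r) (t : ℝ) :
    Tendsto (fun h : ℝ => pih r t h) (𝓝[>] (0:ℝ)) (𝓝 0) := by
  have := ((pih_hasDerivAt r hr_cont t).continuousAt).tendsto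
  rw [pih_zero] at this
  exact this.mono_left nhdsWithin_le_nhds

lemma pih_mem_Ioo (r : ℝ → ℝ) (hr_cont : Continuous r) (hr_pos : ∀ s, 0 < r s)
    (t : ℝ) {h : ℝ} (hh : 0 < h) : 0 < pih r t h ∧ pih r t h < 1 := by
  have hint : 0 < ∫ s in t..(t+h), r s := by
    apply intervalIntegral.intervalIntegral_pos_of_pos_on
      (hr_cont.intervalIntegrable t (t+h)) (fun x _ => hr_pos x)
    linarith
  constructor
  · have : Real.exp (-(∫ s in t..(t+h), r s)) < 1 := by
      rw [Real.exp_lt_one_iff]; linarith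
    simp [pih]; linarith
  · have : 0 < Real.exp (-(∫ s in t..(t+h), r s)) := Real.exp_pos _
    simp [pih]; linarith

lemma bbPmf_mean (n : ℕ) (a b : ℝ) (ha : 0 < a) (hb : 0 < b) :
    ∑ k ∈ Finset.range (n+1), (k:ℝ) * bbPmf n a b k = (n:ℝ) * (a / (a+b)) := by
  have hB := betaFn_pos ha hb
  have : ∑ k ∈ Finset.range (n+1), (k:ℝ) * bbPmf n a b k
      = (∑ k ∈ Finset.range (n+1),
          (k:ℝ) * ((n.choose k : ℝ) * betaFn ((k:ℝ)+a) ((n:ℝ)-(k:ℝ)+b))) / betaFn a b := by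
    rw [Finset.sum_div]
    refine Finset.sum_congr rfl fun k _ => ?_
    unfold bbPmf; ring
  rw [this, betaFn_sum_mean n a b ha hb, betaFn_succ_left ha hb]
  field_simp

lemma bbPmf_sq (n : ℕ) (a b : ℝ) (ha : 0 < a) (hb : 0 < b) :
    ∑ k ∈ Finset.range (n+1), (k:ℝ)^2 * bbPmf n a b k
      = (n:ℝ) * ((n:ℝ)-1) * ((a / (a+b)) * ((a+1) / (a+b+1))) + (n:ℝ) * (a / (a+b)) := by
  have hB := betaFn_pos ha hb
  have hsplit : ∑ k ∈ Finset.range (n+1), (k:ℝ)^2 * bbPmf n a b k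
      = (∑ k ∈ Finset.range (n+1),
            (k:ℝ) * ((k:ℝ)-1) * ((n.choose k : ℝ) * betaFn ((k:ℝ)+a) ((n:ℝ)-(k:ℝ)+b))) / betaFn a b
        + ∑ k ∈ Finset.range (n+1), (k:ℝ) * bbPmf n a b k := by
    rw [Finset.sum_div, ← Finset.sum_add_distrib]
    refine Finset.sum_congr rfl fun k _ => ?_
    unfold bbPmf; ring
  rw [hsplit, betaFn_sum_fact2 n a b ha hb, bbPmf_mean n a b ha hb]
  have h2 : betaFn (a+2) b = betaFn a b * (a/(a+b)) * ((a+1)/(a+1+b)) := by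
    have e : a + 2 = (a+1) + 1 := by ring
    rw [e, betaFn_succ_left (by linarith) hb, betaFn_succ_left ha hb]
  rw [h2]
  have e2 : a + 1 + b = a + b + 1 := by ring
  rw [e2]
  field_simp


/-- for `K_h ~ BB(n, cπ(h), c(1−π(h)))`,
`lim_{h→0+} h⁻¹ E[K_h] = n r(t)`, `lim_{h→0+} h⁻¹ Var[K_h] = (1+(n−1)/(c+1)) n r(t)`,
and the infinitesimal dispersion index (the ratio of these two limits) equals
`1 + (n−1)/(c+1)`, which is `> 1` when `n > 1` and `= 1` when `n = 1`. -/
theorem bbPmf_infinitesimal_dispersion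
    (r : ℝ → ℝ) (hr_cont : Continuous r) (hr_pos : ∀ s, 0 < r s)
    (t c : ℝ) (hc : 0 < c) (n : ℕ) (hn : 1 ≤ n) :
    Tendsto (fun h : ℝ => h⁻¹ *
        ∑ k ∈ Finset.range (n + 1),
          (k : ℝ) * bbPmf n (c * pih r t h) (c * (1 - pih r t h)) k)
      (𝓝[>] (0 : ℝ)) (𝓝 ((n : ℝ) * r t)) ∧
    Tendsto (fun h : ℝ => h⁻¹ *
        ((∑ k ∈ Finset.range (n + 1),
            (k : ℝ) ^ 2 * bbPmf n (c * pih r t h) (c * (1 - pih r t h)) k)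
          - (∑ k ∈ Finset.range (n + 1),
              (k : ℝ) * bbPmf n (c * pih r t h) (c * (1 - pih r t h)) k) ^ 2))
      (𝓝[>] (0 : ℝ)) (𝓝 ((1 + ((n : ℝ) - 1) / (c + 1)) * ((n : ℝ) * r t))) ∧
    ((1 + ((n : ℝ) - 1) / (c + 1)) * ((n : ℝ) * r t)) / ((n : ℝ) * r t)
      = 1 + ((n : ℝ) - 1) / (c + 1) ∧
    (1 < n → 1 < 1 + ((n : ℝ) - 1) / (c + 1)) ∧
    (n = 1 → 1 + ((n : ℝ) - 1) / (c + 1) = 1) := by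
  have hc1 : (0:ℝ) < c + 1 := by linarith
  -- closed forms for h > 0
  have hmean : ∀ h : ℝ, 0 < h →
      ∑ k ∈ Finset.range (n + 1),
          (k : ℝ) * bbPmf n (c * pih r t h) (c * (1 - pih r t h)) k
        = (n:ℝ) * pih r t h := by
    intro h hh
    obtain ⟨hp0, hp1⟩ := pih_mem_Ioo r hr_cont hr_pos t hh
    have ha : 0 < c * pih r t h := mul_pos hc hp0
    have hb : 0 < c * (1 - pih r t h) := mul_pos hc (by linarith)
    rw [bbPmf_mean n _ _ ha hb]
    have hs : c * pih r t h + c * (1 - pih r t h) = c := by ring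
    rw [hs]
    field_simp
  have hsq : ∀ h : ℝ, 0 < h →
      ∑ k ∈ Finset.range (n + 1),
          (k : ℝ)^2 * bbPmf n (c * pih r t h) (c * (1 - pih r t h)) k
        = (n:ℝ) * ((n:ℝ)-1) * (pih r t h * ((c * pih r t h + 1)/(c+1)))
          + (n:ℝ) * pih r t h := by
    intro h hh
    obtain ⟨hp0, hp1⟩ := pih_mem_Ioo r hr_cont hr_pos t hh
    have ha : 0 < c * pih r t h := mul_pos hc hp0
    have hb : 0 < c * (1 - pih r t h) := mul_pos hc (by linarith)
    rw [bbPmf_sq n _ _ ha hb]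
    have hs : c * pih r t h + c * (1 - pih r t h) = c := by ring
    rw [hs]
    have : c * pih r t h / c = pih r t h := by field_simp
    rw [this]
  have hq := tendsto_pih_div r hr_cont t
  have hp := tendsto_pih_zero r hr_cont t
  have hmem : ∀ᶠ h in 𝓝[>] (0:ℝ), 0 < h := self_mem_nhdsWithin
  constructor
  · -- mean limit
    have lim : Tendsto (fun h : ℝ => (n:ℝ) * (h⁻¹ * pih r t h)) (𝓝[>] (0:ℝ))
        (𝓝 ((n:ℝ) * r t)) := hq.const_mul _
    refine lim.congr' ?_
    filter_upwards [hmem] with h hh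
    rw [hmean h hh]; ring
  constructor
  · -- variance limit
    have limG : Tendsto (fun h : ℝ =>
          (n:ℝ) * ((n:ℝ)-1) * ((h⁻¹ * pih r t h) * ((c * pih r t h + 1)/(c+1)))
          + (n:ℝ) * (h⁻¹ * pih r t h)
          - (n:ℝ)^2 * (pih r t h * (h⁻¹ * pih r t h))) (𝓝[>] (0:ℝ))
        (𝓝 ((n:ℝ) * ((n:ℝ)-1) * ((r t) * ((c * 0 + 1)/(c+1)))
          + (n:ℝ) * (r t) - (n:ℝ)^2 * (0 * (r t)))) := by
      have h1 : Tendsto (fun h : ℝ => (c * pih r t h + 1)/(c+1)) (𝓝[>] (0:ℝ))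
          (𝓝 ((c * 0 + 1)/(c+1))) := (((hp.const_mul c).add_const 1).div_const _)
      exact (((hq.mul h1).const_mul _).add (hq.const_mul _)).sub
        (((hp.mul hq)).const_mul _)
    have heq : ((n:ℝ) * ((n:ℝ)-1) * ((r t) * ((c * 0 + 1)/(c+1)))
          + (n:ℝ) * (r t) - (n:ℝ)^2 * (0 * (r t)))
        = (1 + ((n : ℝ) - 1) / (c + 1)) * ((n : ℝ) * r t) := by
      field_simp
      ring
    rw [heq] at limG
    refine limG.congr' ?_
    filter_upwards [hmem] with h hh
    rw [hsq h hh, hmean h hh]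
    ring
  have hnR : (0:ℝ) < (n:ℝ) := by exact_mod_cast hn
  have hden : (n:ℝ) * r t ≠ 0 := (mul_pos hnR (hr_pos t)).ne'
  refine ⟨mul_div_cancel_right₀ _ hden, ?_, ?_⟩
  · intro h1n
    have : (1:ℝ) < (n:ℝ) := by exact_mod_cast h1n
    have : 0 < ((n:ℝ) - 1) / (c + 1) := div_pos (by linarith) hc1
    linarith
  · intro h1
    subst h1
    norm_num
end

section
/- Fix an integer x ≥ 1, and for each h > 0 let (Δ_0^h,…,Δ_m^h) be a random vector with the Dirichlet-multinomial distribution DM(x; cπ_0(h), cπ_1(h),…,cπ_m(h)). Then for each i ∈ {1,…,m}: lim_{h→0+} h⁻¹·E[Δ_i^h] = x·r_i(t) and lim_{h→0+} h⁻¹·Var[Δ_i^h] = (1 + (x−1)/(c+1))·x·r_i(t). Consequently the infinitesimal dispersion index, the ratio of these two limits, equals 1 + (x−1)/(c+1), which is strictly greater than 1 when x > 1 and equal to 1 when x = 1. -/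
open scoped BigOperators
open Filter Topology Asymptotics

/-- The pmf of the Dirichlet-multinomial distribution `DM(x; α_0,…,α_m)` on vectors
`k : Fin (m+1) → ℕ` with `∑ k = x`:
`P(k) = [x!/∏ k_i!] · [Γ(∑α)/∏Γ(α_i)] · [∏Γ(k_i+α_i)] / Γ(x+∑α)`. -/
noncomputable def dmPmf (m x : ℕ) (α : Fin (m + 1) → ℝ) (k : Fin (m + 1) → ℕ) : ℝ :=
  ((x.factorial : ℝ) / ∏ i, ((k i).factorial : ℝ)) *
    (Real.Gamma (∑ i, α i) / ∏ i, Real.Gamma (α i)) *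
    (∏ i, Real.Gamma ((k i : ℝ) + α i)) / Real.Gamma ((x : ℝ) + ∑ i, α i)

/-- Expectation of `f(Δ_0,…,Δ_m)` under `DM(x; α)`: the sum of `f(k) · P(k)` over all
nonnegative integer vectors `k` with `∑ k = x`. -/
noncomputable def dmExp (m x : ℕ) (α : Fin (m + 1) → ℝ) (f : (Fin (m + 1) → ℕ) → ℝ) : ℝ :=
  ∑ k ∈ (Fintype.piFinset fun _ : Fin (m + 1) => Finset.range (x + 1)).filter
      (fun k => ∑ j, k j = x), f k * dmPmf m x α k

/-- `π_i(h) = (1 − exp(−∑_j ∫_t^{t+h} r_j(s) ds)) · r_i(t)/∑_j r_j(t)`, for `i = 1,…,m`. -/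
noncomputable def pmain (m : ℕ) (r : Fin m → ℝ → ℝ) (t h : ℝ) (i : Fin m) : ℝ :=
  (1 - Real.exp (-(∑ j, ∫ s in t..(t + h), r j s))) * r i t / ∑ j, r j t

/-- The Dirichlet parameter vector `(cπ_0(h), cπ_1(h),…,cπ_m(h))`, where
`π_0(h) = 1 − ∑_{i=1}^m π_i(h)`; the index `0 : Fin (m+1)` carries `cπ_0(h)`. -/
noncomputable def alphaVec (m : ℕ) (r : Fin m → ℝ → ℝ) (t c h : ℝ) : Fin (m + 1) → ℝ :=
  Fin.cons (c * (1 - ∑ i, pmain m r t h i)) (fun i => c * pmain m r t h i)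

namespace DMaux

/-! ### Rising factorial and combinatorial identities -/

noncomputable def asc (c : ℝ) : ℕ → ℝ
  | 0 => 1
  | n + 1 => asc c n * (c + n)

lemma asc_succ (c : ℝ) (n : ℕ) : asc c (n + 1) = asc c n * (c + n) := rfl

lemma asc_pos {c : ℝ} (hc : 0 < c) : ∀ n, 0 < asc c n
  | 0 => one_pos
  | n + 1 => mul_pos (asc_pos hc n) (by positivity)

lemma asc_zero_eq (n : ℕ) (hn : 1 ≤ n) : asc 0 n = 0 := by
  induction n with
  | zero => omega
  | succ k ih =>
    rcases Nat.eq_zero_or_pos k with h | h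
    · subst h; simp [asc]
    · simp [asc, ih h]

lemma asc_one (n : ℕ) : asc 1 n = n.factorial := by
  induction n with
  | zero => simp [asc]
  | succ k ih => simp [asc, ih, Nat.factorial_succ]; ring

lemma asc_succ_left (c : ℝ) : ∀ n, asc c (n + 1) = c * asc (c + 1) n
  | 0 => by simp [asc]
  | n + 1 => by
    have h1 : asc c (n + 1 + 1) = asc c (n + 1) * (c + (n+1)) := by
      rw [asc_succ]; push_cast; ring
    have h2 : asc (c+1) (n + 1) = asc (c+1) n * (c + 1 + n) := rfl
    rw [h1, asc_succ_left c n, h2]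
    push_cast
    ring

lemma lemA (c : ℝ) : ∀ x : ℕ, c * ∑ b ∈ Finset.range (x + 1), asc c b / b.factorial
    = asc c (x + 1) / x.factorial
  | 0 => by simp [asc]
  | x + 1 => by
    rw [Finset.sum_range_succ, mul_add, lemA c x]
    have h1 : asc c (x + 1 + 1) = asc c (x + 1) * (c + (x+1)) := by
      rw [asc_succ]; push_cast; ring
    rw [h1]
    have hf : ((x+1).factorial : ℝ) = (x+1) * x.factorial := by
      push_cast [Nat.factorial_succ]; ring
    rw [hf]
    have hx : (x.factorial : ℝ) ≠ 0 := Nat.cast_ne_zero.2 x.factorial_ne_zero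
    field_simp
    ring

lemma lemB (c : ℝ) : ∀ x : ℕ, (c + 1) * ∑ b ∈ Finset.range (x + 1),
      (b : ℝ) * asc c b / b.factorial = x * asc c (x + 1) / x.factorial
  | 0 => by simp [asc]
  | x + 1 => by
    rw [Finset.sum_range_succ, mul_add, lemB c x]
    have h1 : asc c (x + 1 + 1) = asc c (x + 1) * (c + (x+1)) := by
      rw [asc_succ]; push_cast; ring
    rw [h1]
    have hf : ((x+1).factorial : ℝ) = (x+1) * x.factorial := by
      push_cast [Nat.factorial_succ]; ring
    rw [hf]
    have hx : (x.factorial : ℝ) ≠ 0 := Nat.cast_ne_zero.2 x.factorial_ne_zero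
    push_cast
    field_simp
    ring

lemma Gamma_nat_add {a : ℝ} (ha : 0 < a) : ∀ n : ℕ, Real.Gamma (n + a) = asc a n * Real.Gamma a
  | 0 => by simp [asc]
  | n + 1 => by
    have hne : (n:ℝ) + a ≠ 0 := by positivity
    rw [show ((n+1 : ℕ):ℝ) + a = ((n:ℝ) + a) + 1 by push_cast; ring,
      Real.Gamma_add_one hne, Gamma_nat_add ha n]
    show _ = asc a n * (a + n) * Real.Gamma a
    ring

lemma asc_cont (n : ℕ) : Continuous (fun y : ℝ => asc y n) := by
  induction n with
  | zero => exact continuous_const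
  | succ p ih =>
    have : (fun y : ℝ => asc y (p+1)) = fun y => asc y p * (y + p) := rfl
    rw [this]
    exact ih.mul (continuous_id.add continuous_const)

/-! ### Rewriting the pmf via rising factorials -/

lemma dmPmf_eq (m x : ℕ) (α : Fin (m+1) → ℝ) (hα : ∀ j, 0 < α j) (k : Fin (m+1) → ℕ) :
    dmPmf m x α k = ((x.factorial : ℝ) / ∏ j, ((k j).factorial : ℝ)) *
      (∏ j, asc (α j) (k j)) / asc (∑ j, α j) x := by
  have hs : 0 < ∑ j, α j := Finset.sum_pos (fun j _ => hα j) ⟨0, Finset.mem_univ 0⟩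
  have h1 : ∀ j, Real.Gamma ((k j : ℝ) + α j) = asc (α j) (k j) * Real.Gamma (α j) :=
    fun j => Gamma_nat_add (hα j) (k j)
  have h2 : Real.Gamma ((x:ℝ) + ∑ j, α j) = asc (∑ j, α j) x * Real.Gamma (∑ j, α j) :=
    Gamma_nat_add hs x
  unfold dmPmf
  rw [h2, Finset.prod_congr rfl (fun j _ => h1 j), Finset.prod_mul_distrib]
  have hΓ : ∀ j : Fin (m+1), Real.Gamma (α j) ≠ 0 :=
    fun j => (Real.Gamma_pos_of_pos (hα j)).ne'
  have hΓs : Real.Gamma (∑ j, α j) ≠ 0 := (Real.Gamma_pos_of_pos hs).ne'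
  have hΓp : (∏ j, Real.Gamma (α j)) ≠ 0 := Finset.prod_ne_zero_iff.2 fun j _ => hΓ j
  have hasc : asc (∑ j, α j) x ≠ 0 := (asc_pos hs x).ne'
  field_simp

/-! ### Analytic limits of `pmain` -/

variable {m : ℕ} {r : Fin m → ℝ → ℝ} {t c : ℝ}

lemma hasDerivAt_G (hr_cont : ∀ i, Continuous (r i)) :
    HasDerivAt (fun h : ℝ => 1 - Real.exp (-(∑ j, ∫ s in t..(t + h), r j s)))
      (∑ j, r j t) 0 := by
  have hF : ∀ j : Fin m, HasDerivAt (fun h : ℝ => ∫ s in t..(t + h), r j s) (r j t) 0 := by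
    intro j
    have h1 : HasDerivAt (fun u : ℝ => ∫ s in t..u, r j s) (r j t) t :=
      intervalIntegral.integral_hasDerivAt_right ((hr_cont j).intervalIntegrable t t)
        ((hr_cont j).stronglyMeasurableAtFilter _ _) (hr_cont j).continuousAt
    have h2 : HasDerivAt (fun h : ℝ => t + h) 1 0 := by
      simpa using (hasDerivAt_id (0:ℝ)).const_add t
    have := HasDerivAt.comp (0:ℝ) (by simpa using h1) h2
    simpa [Function.comp_def] using this
  have hsum : HasDerivAt (fun h : ℝ => ∑ j, ∫ s in t..(t + h), r j s) (∑ j, r j t) 0 :=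
    HasDerivAt.fun_sum (fun j _ => hF j)
  have hexp : HasDerivAt (fun h : ℝ => Real.exp (-(∑ j, ∫ s in t..(t + h), r j s)))
      (Real.exp (-(∑ j, ∫ s in t..(t + 0), r j s)) * (-(∑ j, r j t))) 0 :=
    (hsum.neg).exp
  have h0 : (∑ j, ∫ s in t..(t + 0), r j s) = 0 := by simp
  rw [h0] at hexp
  simpa using hexp.const_sub 1

lemma pm_lim (hm : 0 < m) (hr_cont : ∀ i, Continuous (r i))
    (hr_pos : ∀ i s, 0 < r i s) (j : Fin m) :
    Tendsto (fun h : ℝ => h⁻¹ * pmain m r t h j) (𝓝[>] (0:ℝ)) (𝓝 (r j t)) := by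
  have hS : 0 < ∑ j, r j t :=
    Finset.sum_pos (fun j _ => hr_pos j t) (Finset.univ_nonempty_iff.2 ⟨⟨0, hm⟩⟩)
  set G : ℝ → ℝ := fun h => 1 - Real.exp (-(∑ j, ∫ s in t..(t + h), r j s)) with hGdef
  have hG : HasDerivAt G (∑ j, r j t) 0 := hasDerivAt_G hr_cont
  have hslope : Tendsto (slope G 0) (𝓝[≠] (0:ℝ)) (𝓝 (∑ j, r j t)) :=
    hasDerivAt_iff_tendsto_slope.1 hG
  have hslope' : Tendsto (slope G 0) (𝓝[>] (0:ℝ)) (𝓝 (∑ j, r j t)) :=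
    hslope.mono_left (nhdsWithin_mono 0 (fun x hx => ne_of_gt hx))
  have hmul : Tendsto (fun h => slope G 0 h * (r j t / ∑ j, r j t)) (𝓝[>] (0:ℝ))
      (𝓝 ((∑ j, r j t) * (r j t / ∑ j, r j t))) := hslope'.mul_const _
  have heq : (∑ j, r j t) * (r j t / ∑ j, r j t) = r j t := by field_simp
  rw [heq] at hmul
  refine hmul.congr' ?_
  filter_upwards [self_mem_nhdsWithin] with h (hh : 0 < h)
  have hG0 : G 0 = 0 := by simp [hGdef]
  have hpm : pmain m r t h j = G h * r j t / ∑ j, r j t := rfl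
  rw [slope_def_field, hG0, hpm]
  simp only [sub_zero]
  have hh' : h ≠ 0 := hh.ne'
  field_simp

lemma pm_zero (hr_cont : ∀ i, Continuous (r i)) (j : Fin m) :
    Tendsto (fun h : ℝ => pmain m r t h j) (𝓝[>] (0:ℝ)) (𝓝 0) := by
  set G : ℝ → ℝ := fun h => 1 - Real.exp (-(∑ j, ∫ s in t..(t + h), r j s)) with hGdef
  have hG : ContinuousAt G 0 := (hasDerivAt_G hr_cont).continuousAt
  have : Tendsto (fun h => G h * (r j t / ∑ j, r j t)) (𝓝 (0:ℝ))
      (𝓝 (G 0 * (r j t / ∑ j, r j t))) := (hG.tendsto).mul_const _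
  have hG0 : G 0 = 0 := by simp [hGdef]
  rw [hG0, zero_mul] at this
  refine (this.mono_left nhdsWithin_le_nhds).congr (fun h => ?_)
  show G h * (r j t / ∑ j, r j t) = G h * r j t / ∑ j, r j t
  rw [mul_div_assoc]

lemma sum_pm (hm : 0 < m) (hr_pos : ∀ i s, 0 < r i s) (h : ℝ) :
    ∑ j, pmain m r t h j = 1 - Real.exp (-(∑ j, ∫ s in t..(t + h), r j s)) := by
  have hS : (∑ j, r j t) ≠ 0 :=
    (Finset.sum_pos (fun j _ => hr_pos j t) (Finset.univ_nonempty_iff.2 ⟨⟨0, hm⟩⟩)).ne'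
  unfold pmain
  rw [← Finset.sum_div, ← Finset.mul_sum, mul_div_assoc, div_self hS, mul_one]

lemma pm_pos (hr_cont : ∀ i, Continuous (r i)) (hr_pos : ∀ i s, 0 < r i s)
    {h : ℝ} (hh : 0 < h) (j : Fin m) : 0 < pmain m r t h j := by
  have hS : 0 < ∑ j, r j t :=
    Finset.sum_pos (fun j _ => hr_pos j t) (Finset.univ_nonempty_iff.2 ⟨j⟩)
  have hFj : ∀ j : Fin m, 0 < ∫ s in t..(t + h), r j s := fun j =>
    intervalIntegral.intervalIntegral_pos_of_pos ((hr_cont j).intervalIntegrable t (t+h))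
      (fun s => hr_pos j s) (by linarith)
  have hF : 0 < ∑ j, ∫ s in t..(t + h), r j s :=
    Finset.sum_pos (fun j _ => hFj j) (Finset.univ_nonempty_iff.2 ⟨j⟩)
  have : Real.exp (-(∑ j, ∫ s in t..(t + h), r j s)) < 1 := by
    rw [Real.exp_lt_one_iff]; linarith
  unfold pmain
  have h2 := hr_pos j t
  have h1 : 0 < 1 - Real.exp (-(∑ j, ∫ s in t..(t + h), r j s)) := by linarith
  positivity

/-! ### Properties of `alphaVec` -/

lemma alphaVec_zero (h : ℝ) : alphaVec m r t c h 0 = c * (1 - ∑ j, pmain m r t h j) := rfl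

lemma alphaVec_succ (h : ℝ) (j : Fin m) :
    alphaVec m r t c h j.succ = c * pmain m r t h j := by
  unfold alphaVec; rw [Fin.cons_succ]

lemma sum_alphaVec (h : ℝ) : ∑ j, alphaVec m r t c h j = c := by
  unfold alphaVec
  rw [Fin.sum_cons, ← Finset.mul_sum]
  ring

lemma alphaVec_pos (hm : 0 < m) (hr_cont : ∀ i, Continuous (r i))
    (hr_pos : ∀ i s, 0 < r i s) (hc : 0 < c) {h : ℝ} (hh : 0 < h) (j : Fin (m+1)) :
    0 < alphaVec m r t c h j := by
  refine Fin.cases ?_ ?_ j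
  · rw [alphaVec_zero, sum_pm hm hr_pos]
    have := Real.exp_pos (-(∑ j, ∫ s in t..(t + h), r j s))
    nlinarith
  · intro j
    rw [alphaVec_succ]
    exact mul_pos hc (pm_pos hr_cont hr_pos hh j)

/-! ### Limit of each summand -/

noncomputable def Lfun (m x : ℕ) (r : Fin m → ℝ → ℝ) (t c : ℝ) (i : Fin m) (p : ℕ)
    (k : Fin (m + 1) → ℕ) : ℝ :=
  (k i.succ : ℝ) ^ p * ((x.factorial : ℝ) / ∏ j, ((k j).factorial : ℝ)) *
    (c * r i t * asc c (k 0) * (((k i.succ - 1).factorial : ℕ) : ℝ) *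
      ∏ j ∈ Finset.univ.erase i, asc 0 (k j.succ)) / asc c x

lemma term_lim (hm : 0 < m) (hr_cont : ∀ i, Continuous (r i)) (hr_pos : ∀ i s, 0 < r i s)
    (hc : 0 < c) (x : ℕ) (i : Fin m) (p : ℕ) (hp : 1 ≤ p) (k : Fin (m + 1) → ℕ) :
    Tendsto (fun h : ℝ => h⁻¹ * ((k i.succ : ℝ) ^ p * dmPmf m x (alphaVec m r t c h) k))
      (𝓝[>] (0:ℝ)) (𝓝 (Lfun m x r t c i p k)) := by
  by_cases hk0 : k i.succ = 0
  · have hz : ((k i.succ : ℕ) : ℝ) ^ p = 0 := by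
      rw [hk0]; simp [zero_pow (by omega : p ≠ 0)]
    have : Lfun m x r t c i p k = 0 := by unfold Lfun; rw [hz]; ring
    rw [this]
    refine tendsto_const_nhds.congr (fun h => ?_)
    rw [hz]; ring
  · obtain ⟨a, ha⟩ : ∃ a, k i.succ = a + 1 := ⟨k i.succ - 1, by omega⟩
    set A : ℝ → Fin (m+1) → ℝ := fun h => alphaVec m r t c h with hA
    have hA0 : Tendsto (fun h : ℝ => A h 0) (𝓝[>] (0:ℝ)) (𝓝 c) := by
      have hsum : Tendsto (fun h : ℝ => ∑ j, pmain m r t h j) (𝓝[>] (0:ℝ)) (𝓝 0) := by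
        have := tendsto_finset_sum Finset.univ
          (fun j (_ : j ∈ Finset.univ) => pm_zero (t := t) hr_cont j)
        simpa using this
      have h1 : Tendsto (fun h : ℝ => (1:ℝ) - ∑ j, pmain m r t h j) (𝓝[>] (0:ℝ))
          (𝓝 ((1:ℝ) - 0)) :=
        Tendsto.sub tendsto_const_nhds hsum
      have h2 := h1.const_mul c
      simp only [sub_zero, mul_one] at h2
      exact h2.congr (fun h => (alphaVec_zero h).symm)
    have hAsucc : ∀ j : Fin m, Tendsto (fun h : ℝ => A h j.succ) (𝓝[>] (0:ℝ)) (𝓝 0) := by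
      intro j
      have := (pm_zero (t := t) hr_cont j).const_mul c
      rw [mul_zero] at this
      exact this.congr (fun h => (alphaVec_succ h j).symm)
    have hAslope : Tendsto (fun h : ℝ => h⁻¹ * A h i.succ) (𝓝[>] (0:ℝ)) (𝓝 (c * r i t)) := by
      have := (pm_lim (t := t) hm hr_cont hr_pos i).const_mul c
      refine this.congr (fun h => ?_)
      simp only [hA]
      rw [alphaVec_succ]; ring
    have T0 : Tendsto (fun h : ℝ => asc (A h 0) (k 0)) (𝓝[>] (0:ℝ)) (𝓝 (asc c (k 0))) :=
      ((asc_cont (k 0)).tendsto c).comp hA0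
    have Ti : Tendsto (fun h : ℝ => asc (A h i.succ + 1) a) (𝓝[>] (0:ℝ)) (𝓝 (asc 1 a)) := by
      have h1 : Tendsto (fun h : ℝ => A h i.succ + 1) (𝓝[>] (0:ℝ)) (𝓝 1) := by
        have := (hAsucc i).add_const 1
        rwa [zero_add] at this
      exact ((asc_cont a).tendsto 1).comp h1
    have Te : Tendsto (fun h : ℝ => ∏ j ∈ Finset.univ.erase i, asc (A h j.succ) (k j.succ))
        (𝓝[>] (0:ℝ)) (𝓝 (∏ j ∈ Finset.univ.erase i, asc 0 (k j.succ))) := by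
      refine tendsto_finset_prod _ (fun j _ => ?_)
      exact ((asc_cont (k j.succ)).tendsto 0).comp (hAsucc j)
    have Tall : Tendsto (fun h : ℝ => (h⁻¹ * A h i.succ) * asc (A h i.succ + 1) a *
          asc (A h 0) (k 0) * ∏ j ∈ Finset.univ.erase i, asc (A h j.succ) (k j.succ))
        (𝓝[>] (0:ℝ)) (𝓝 ((c * r i t) * asc 1 a * asc c (k 0) *
          ∏ j ∈ Finset.univ.erase i, asc 0 (k j.succ))) :=
      ((hAslope.mul Ti).mul T0).mul Te
    have Tfin := Tall.const_mul ((k i.succ : ℝ) ^ p *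
      ((x.factorial : ℝ) / ∏ j, ((k j).factorial : ℝ)) / asc c x)
    have hLfun : Lfun m x r t c i p k = (k i.succ : ℝ) ^ p *
        ((x.factorial : ℝ) / ∏ j, ((k j).factorial : ℝ)) / asc c x *
        ((c * r i t) * asc 1 a * asc c (k 0) *
          ∏ j ∈ Finset.univ.erase i, asc 0 (k j.succ)) := by
      have h1 : k i.succ - 1 = a := by omega
      unfold Lfun
      rw [h1, asc_one]
      ring
    rw [hLfun]
    refine Tfin.congr' ?_
    filter_upwards [self_mem_nhdsWithin] with h (hh : 0 < h)
    have hpmf : dmPmf m x (A h) k = ((x.factorial : ℝ) / ∏ j, ((k j).factorial : ℝ)) *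
        (∏ j, asc (A h j) (k j)) / asc c x := by
      rw [dmPmf_eq m x (A h) (alphaVec_pos hm hr_cont hr_pos hc hh) k, sum_alphaVec]
    have hprod : (∏ j, asc (A h j) (k j)) = asc (A h 0) (k 0) *
        (asc (A h i.succ) (k i.succ) *
          ∏ j ∈ Finset.univ.erase i, asc (A h j.succ) (k j.succ)) := by
      rw [Fin.prod_univ_succ, Finset.mul_prod_erase Finset.univ
        (fun j : Fin m => asc (A h j.succ) (k j.succ)) (Finset.mem_univ i)]
    have hsplit : asc (A h i.succ) (k i.succ) = A h i.succ * asc (A h i.succ + 1) a := by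
      rw [ha, asc_succ_left]
    rw [hpmf, hprod, hsplit]
    ring

/-! ### Reindexing and evaluating the sum of limits -/

lemma sum_L_reindex (x : ℕ) (i : Fin m) (p : ℕ) (hp : 1 ≤ p) :
    ∑ k ∈ (Fintype.piFinset fun _ : Fin (m + 1) => Finset.range (x + 1)).filter
        (fun k => ∑ j, k j = x), Lfun m x r t c i p k
      = ∑ b ∈ Finset.range x, ((x - b : ℕ) : ℝ) ^ p *
          ((x.factorial : ℝ) / ((b.factorial : ℝ) * (((x - b).factorial : ℕ) : ℝ))) *
          (c * r i t * asc c b * (((x - b - 1).factorial : ℕ) : ℝ)) / asc c x := by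
  classical
  set S := (Fintype.piFinset fun _ : Fin (m + 1) => Finset.range (x + 1)).filter
      (fun k => ∑ j, k j = x) with hS
  set e : ℕ → (Fin (m + 1) → ℕ) :=
    fun b => Fin.cons b (fun j => if j = i then x - b else 0) with he
  have he0 : ∀ b, e b 0 = b := fun b => rfl
  have hesucc : ∀ b j, e b j.succ = if j = i then x - b else 0 := by
    intro b j; simp [he]
  have himg : (Finset.range x).image e ⊆ S := by
    intro k hk
    obtain ⟨b, hb, rfl⟩ := Finset.mem_image.1 hk
    rw [Finset.mem_range] at hb
    rw [hS, Finset.mem_filter]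
    constructor
    · rw [Fintype.mem_piFinset]
      intro j
      refine Fin.cases ?_ ?_ j
      · rw [he0, Finset.mem_range]; omega
      · intro j
        rw [hesucc, Finset.mem_range]
        split <;> omega
    · rw [he]
      rw [Fin.sum_cons]
      simp only [Finset.sum_ite_eq', Finset.mem_univ, if_true]
      omega
  have hzero : ∀ k ∈ S, k ∉ (Finset.range x).image e → Lfun m x r t c i p k = 0 := by
    intro k hkS hknot
    rw [hS, Finset.mem_filter, Fintype.mem_piFinset] at hkS
    obtain ⟨hmem, hsum⟩ := hkS
    by_cases hki : k i.succ = 0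
    · unfold Lfun
      rw [hki]
      simp [zero_pow (by omega : p ≠ 0)]
    · by_cases hoth : ∀ j ∈ Finset.univ.erase i, k j.succ = 0
      · exfalso
        apply hknot
        have hx0 : ∑ j, k j = k 0 + ∑ j : Fin m, k j.succ := Fin.sum_univ_succ k
        have hsm : (∑ j : Fin m, k j.succ) = k i.succ + ∑ j ∈ Finset.univ.erase i, k j.succ :=
          (Finset.add_sum_erase Finset.univ (fun j : Fin m => k j.succ)
            (Finset.mem_univ i)).symm
        have hz : ∑ j ∈ Finset.univ.erase i, k j.succ = 0 :=
          Finset.sum_eq_zero hoth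
        have hdecomp : x = k 0 + k i.succ := by
          rw [← hsum, hx0, hsm, hz]; omega
        refine Finset.mem_image.2 ⟨k 0, Finset.mem_range.2 (by omega), ?_⟩
        funext j
        refine Fin.cases ?_ ?_ j
        · rw [he0]
        · intro j
          rw [hesucc]
          by_cases hji : j = i
          · subst hji
            rw [if_pos rfl]
            omega
          · rw [if_neg hji]
            exact (hoth j (Finset.mem_erase.2 ⟨hji, Finset.mem_univ j⟩)).symm
      · push_neg at hoth
        obtain ⟨j, hj, hjk⟩ := hoth
        unfold Lfun
        rw [Finset.prod_eq_zero hj (asc_zero_eq (k j.succ) (by omega))]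
        ring
  rw [← Finset.sum_subset himg hzero]
  have hinj : ∀ a ∈ Finset.range x, ∀ b ∈ Finset.range x, e a = e b → a = b := by
    intro a _ b _ hab
    have h := congrArg (fun f : Fin (m+1) → ℕ => f 0) hab
    rw [he0 a, he0 b] at h
    exact h
  rw [Finset.sum_image hinj]
  refine Finset.sum_congr rfl (fun b hb => ?_)
  rw [Finset.mem_range] at hb
  have h1 : e b i.succ = x - b := by rw [hesucc, if_pos rfl]
  have h2 : e b 0 = b := he0 b
  have h3 : (∏ j, ((e b j).factorial : ℝ)) = (b.factorial : ℝ) * ((x - b).factorial : ℝ) := by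
    rw [Fin.prod_univ_succ]
    rw [h2]
    congr 1
    have : ∀ j : Fin m, ((e b j.succ).factorial : ℝ)
        = if j = i then ((x - b).factorial : ℝ) else 1 := by
      intro j
      rw [hesucc]
      split <;> simp
    rw [Finset.prod_congr rfl (fun j _ => this j)]
    simp [Finset.prod_ite_eq']
  have h4 : (∏ j ∈ Finset.univ.erase i, asc 0 (e b j.succ)) = 1 := by
    refine Finset.prod_eq_one (fun j hj => ?_)
    rw [hesucc, if_neg (Finset.mem_erase.1 hj).1]
    rfl
  unfold Lfun
  rw [h1, h2, h3, h4]
  ring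

lemma sum_L_one (hc : 0 < c) (x : ℕ) (hx : 1 ≤ x) (i : Fin m) :
    ∑ k ∈ (Fintype.piFinset fun _ : Fin (m + 1) => Finset.range (x + 1)).filter
        (fun k => ∑ j, k j = x), Lfun m x r t c i 1 k = (x : ℝ) * r i t := by
  rw [sum_L_reindex (t := t) x i 1 le_rfl]
  obtain ⟨n, rfl⟩ : ∃ n, x = n + 1 := ⟨x - 1, by omega⟩
  have hkey : ∀ b ∈ Finset.range (n + 1),
      ((n + 1 - b : ℕ) : ℝ) ^ 1 *
          (((n+1).factorial : ℝ) / ((b.factorial : ℝ) * (((n+1 - b).factorial : ℕ) : ℝ))) *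
          (c * r i t * asc c b * (((n+1 - b - 1).factorial : ℕ) : ℝ)) / asc c (n+1)
        = (asc c b / b.factorial) * (c * r i t * ((n+1).factorial : ℝ) / asc c (n+1)) := by
    intro b hb
    rw [Finset.mem_range] at hb
    obtain ⟨d, hd⟩ : ∃ d, n + 1 - b = d + 1 := ⟨n - b, by omega⟩
    rw [hd]
    simp only [Nat.add_sub_cancel]
    have hb0 : (b.factorial : ℝ) ≠ 0 := Nat.cast_ne_zero.2 b.factorial_ne_zero
    have hd0 : (d.factorial : ℝ) ≠ 0 := Nat.cast_ne_zero.2 d.factorial_ne_zero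
    have hA : 0 < asc c (n+1) := asc_pos hc (n+1)
    rw [Nat.factorial_succ d]
    push_cast
    field_simp
  rw [Finset.sum_congr rfl hkey, ← Finset.sum_mul]
  have hs := lemA c n
  have hn0 : (n.factorial : ℝ) ≠ 0 := Nat.cast_ne_zero.2 n.factorial_ne_zero
  have hA : asc c (n+1) ≠ 0 := (asc_pos hc (n+1)).ne'
  have hsum : ∑ b ∈ Finset.range (n + 1), asc c b / b.factorial
      = asc c (n+1) / (c * n.factorial) := by
    rw [eq_div_iff (by positivity)]
    rw [eq_div_iff hn0] at hs
    rw [← hs]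
    ring
  rw [hsum, Nat.factorial_succ n]
  push_cast
  field_simp

lemma sum_L_two (hc : 0 < c) (x : ℕ) (hx : 1 ≤ x) (i : Fin m) :
    ∑ k ∈ (Fintype.piFinset fun _ : Fin (m + 1) => Finset.range (x + 1)).filter
        (fun k => ∑ j, k j = x), Lfun m x r t c i 2 k
      = (1 + ((x : ℝ) - 1) / (c + 1)) * ((x : ℝ) * r i t) := by
  rw [sum_L_reindex (t := t) x i 2 (by norm_num)]
  obtain ⟨n, rfl⟩ : ∃ n, x = n + 1 := ⟨x - 1, by omega⟩
  have hkey : ∀ b ∈ Finset.range (n + 1),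
      ((n + 1 - b : ℕ) : ℝ) ^ 2 *
          (((n+1).factorial : ℝ) / ((b.factorial : ℝ) * (((n+1 - b).factorial : ℕ) : ℝ))) *
          (c * r i t * asc c b * (((n+1 - b - 1).factorial : ℕ) : ℝ)) / asc c (n+1)
        = (((n:ℝ)+1) * (asc c b / b.factorial) - ((b:ℝ) * asc c b / b.factorial)) *
            (c * r i t * ((n+1).factorial : ℝ) / asc c (n+1)) := by
    intro b hb
    rw [Finset.mem_range] at hb
    obtain ⟨d, hd⟩ : ∃ d, n + 1 - b = d + 1 := ⟨n - b, by omega⟩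
    have hcast : ((n + 1 - b : ℕ) : ℝ) = (n : ℝ) + 1 - b := by
      push_cast [Nat.cast_sub (by omega : b ≤ n + 1)]
      ring
    rw [hd] at hcast
    rw [hd]
    simp only [Nat.add_sub_cancel]
    have hb0 : (b.factorial : ℝ) ≠ 0 := Nat.cast_ne_zero.2 b.factorial_ne_zero
    have hd0 : (d.factorial : ℝ) ≠ 0 := Nat.cast_ne_zero.2 d.factorial_ne_zero
    have hA : 0 < asc c (n+1) := asc_pos hc (n+1)
    have hdb : (d:ℝ) = (n:ℝ) - (b:ℝ) := by
      have h' : d = n - b := by omega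
      subst h'
      push_cast [Nat.cast_sub (by omega : b ≤ n)]
      ring
    rw [Nat.factorial_succ d]
    push_cast
    have hnb : (n:ℝ) = (d:ℝ) + (b:ℝ) := by linarith
    rw [hnb]
    have hd1 : ((d:ℝ) + 1) ≠ 0 := by positivity
    field_simp
    ring
  rw [Finset.sum_congr rfl hkey, ← Finset.sum_mul, Finset.sum_sub_distrib, ← Finset.mul_sum]
  have hn0 : (n.factorial : ℝ) ≠ 0 := Nat.cast_ne_zero.2 n.factorial_ne_zero
  have hA : asc c (n+1) ≠ 0 := (asc_pos hc (n+1)).ne'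
  have hsum1 : ∑ b ∈ Finset.range (n + 1), asc c b / b.factorial
      = asc c (n+1) / (c * n.factorial) := by
    rw [eq_div_iff (by positivity)]
    have hs := lemA c n
    rw [eq_div_iff hn0] at hs
    rw [← hs]
    ring
  have hc1 : (0:ℝ) < c + 1 := by linarith
  have hsum2 : ∑ b ∈ Finset.range (n + 1), (b:ℝ) * asc c b / b.factorial
      = (n : ℝ) * asc c (n+1) / ((c+1) * n.factorial) := by
    rw [eq_div_iff (by positivity)]
    have hs := lemB c n
    rw [eq_div_iff hn0] at hs
    rw [← hs]
    ring
  rw [hsum1, hsum2, Nat.factorial_succ n]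
  push_cast
  field_simp
  ring

end DMaux

open DMaux

/-- for `(Δ_0^h,…,Δ_m^h) ~ DM(x; cπ_0(h),…,cπ_m(h))` and each `i ∈ {1,…,m}`,
`lim_{h→0+} h⁻¹ E[Δ_i^h] = x r_i(t)` and
`lim_{h→0+} h⁻¹ Var[Δ_i^h] = (1+(x−1)/(c+1)) x r_i(t)`; the infinitesimal dispersion
index (the ratio of the limits) equals `1+(x−1)/(c+1)`, which is `> 1` when `x > 1`
and `= 1` when `x = 1`. -/
theorem dm_infinitesimal_dispersion
    (m : ℕ) (hm : 1 ≤ m) (r : Fin m → ℝ → ℝ)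
    (hr_cont : ∀ i, Continuous (r i)) (hr_pos : ∀ i s, 0 < r i s)
    (t c : ℝ) (hc : 0 < c) (x : ℕ) (hx : 1 ≤ x) (i : Fin m) :
    Tendsto (fun h : ℝ => h⁻¹ *
        dmExp m x (alphaVec m r t c h) (fun k => (k i.succ : ℝ)))
      (𝓝[>] (0 : ℝ)) (𝓝 ((x : ℝ) * r i t)) ∧
    Tendsto (fun h : ℝ => h⁻¹ *
        (dmExp m x (alphaVec m r t c h) (fun k => (k i.succ : ℝ) ^ 2)
          - (dmExp m x (alphaVec m r t c h) (fun k => (k i.succ : ℝ))) ^ 2))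
      (𝓝[>] (0 : ℝ)) (𝓝 ((1 + ((x : ℝ) - 1) / (c + 1)) * ((x : ℝ) * r i t))) ∧
    ((1 + ((x : ℝ) - 1) / (c + 1)) * ((x : ℝ) * r i t)) / ((x : ℝ) * r i t)
      = 1 + ((x : ℝ) - 1) / (c + 1) ∧
    (1 < x → 1 < 1 + ((x : ℝ) - 1) / (c + 1)) ∧
    (x = 1 → 1 + ((x : ℝ) - 1) / (c + 1) = 1) := by
  have hm' : 0 < m := hm
  have key : ∀ p : ℕ, 1 ≤ p →
      Tendsto (fun h : ℝ => h⁻¹ * dmExp m x (alphaVec m r t c h)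
          (fun k => (k i.succ : ℝ) ^ p)) (𝓝[>] (0:ℝ))
        (𝓝 (∑ k ∈ (Fintype.piFinset fun _ : Fin (m + 1) => Finset.range (x + 1)).filter
            (fun k => ∑ j, k j = x), Lfun m x r t c i p k)) := by
    intro p hp
    have := tendsto_finset_sum
      ((Fintype.piFinset fun _ : Fin (m + 1) => Finset.range (x + 1)).filter
        (fun k => ∑ j, k j = x))
      (fun k (_ : k ∈ _) => term_lim (t := t) hm' hr_cont hr_pos hc x i p hp k)
    refine this.congr (fun h => ?_)
    unfold dmExp
    rw [Finset.mul_sum]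
  have hpow1 : (fun k : Fin (m+1) → ℕ => (k i.succ : ℝ))
      = fun k => (k i.succ : ℝ) ^ 1 := by
    funext k; rw [pow_one]
  have E1 : Tendsto (fun h : ℝ => h⁻¹ *
      dmExp m x (alphaVec m r t c h) (fun k => (k i.succ : ℝ)))
      (𝓝[>] (0:ℝ)) (𝓝 ((x : ℝ) * r i t)) := by
    have h1 := key 1 le_rfl
    rw [sum_L_one (t := t) hc x hx i] at h1
    rw [hpow1]
    exact h1
  have E2 : Tendsto (fun h : ℝ => h⁻¹ *
      dmExp m x (alphaVec m r t c h) (fun k => (k i.succ : ℝ) ^ 2))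
      (𝓝[>] (0:ℝ)) (𝓝 ((1 + ((x : ℝ) - 1) / (c + 1)) * ((x : ℝ) * r i t))) := by
    have h2 := key 2 (by norm_num)
    rw [sum_L_two (t := t) hc x hx i] at h2
    exact h2
  have hxr : (0:ℝ) < (x : ℝ) * r i t := by
    have := hr_pos i t
    have hx' : (0:ℝ) < (x:ℝ) := by exact_mod_cast hx
    positivity
  refine ⟨E1, ?_, ?_, ?_, ?_⟩
  · -- variance limit
    have hid : Tendsto (fun h : ℝ => h) (𝓝[>] (0:ℝ)) (𝓝 0) :=
      tendsto_id.mono_left nhdsWithin_le_nhds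
    have hE1zero : Tendsto (fun h : ℝ =>
        dmExp m x (alphaVec m r t c h) (fun k => (k i.succ : ℝ)))
        (𝓝[>] (0:ℝ)) (𝓝 0) := by
      have := hid.mul E1
      rw [zero_mul] at this
      refine this.congr' ?_
      filter_upwards [self_mem_nhdsWithin] with h (hh : 0 < h)
      field_simp
    have hsq : Tendsto (fun h : ℝ => h⁻¹ *
        (dmExp m x (alphaVec m r t c h) (fun k => (k i.succ : ℝ))) ^ 2)
        (𝓝[>] (0:ℝ)) (𝓝 0) := by
      have := E1.mul hE1zero
      rw [mul_zero] at this
      refine this.congr (fun h => ?_)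
      ring
    have := E2.sub hsq
    rw [sub_zero] at this
    refine this.congr (fun h => ?_)
    ring
  · rw [mul_div_assoc, div_self hxr.ne', mul_one]
  · intro hx1
    have h1 : (0:ℝ) < (x:ℝ) - 1 := by
      have : (1:ℝ) < (x:ℝ) := by exact_mod_cast hx1
      linarith
    have h2 : (0:ℝ) < c + 1 := by linarith
    have := div_pos h1 h2
    linarith
  · intro hx1
    subst hx1
    norm_num
end

section
/- Fix an integer x ≥ 1, and for each h > 0 let (Δ_0^h,…,Δ_m^h) be a random vector with the Dirichlet-multinomial distribution DM(x; cπ_0(h), cπ_1(h),…,cπ_m(h)). Then for all i ≠ j in {1,…,m}, lim_{h→0+} h⁻¹·Cov(Δ_i^h, Δ_j^h) = 0. -/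
open scoped BigOperators
open Filter Topology Asymptotics

/-! ### Auxiliary lemmas -/

lemma gamma_nat_add (a : ℝ) (ha : 0 < a) (n : ℕ) :
    Real.Gamma ((n : ℝ) + a) = (∏ l ∈ Finset.range n, (a + l)) * Real.Gamma a := by
  induction n with
  | zero => simp
  | succ n ih =>
    have h1 : ((n + 1 : ℕ) : ℝ) + a = ((n : ℝ) + a) + 1 := by push_cast; ring
    have h2 : (n : ℝ) + a ≠ 0 := by positivity
    rw [h1, Real.Gamma_add_one h2, ih, Finset.prod_range_succ]
    ring

noncomputable def dmSum (m x : ℕ) (D : ℝ) (f : (Fin (m + 1) → ℕ) → ℝ)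
    (g : Fin (m + 1) → ℕ → ℝ) : ℝ :=
  ∑ k ∈ (Fintype.piFinset fun _ : Fin (m + 1) => Finset.range (x + 1)).filter
      (fun k => ∑ j, k j = x),
    f k * (((x.factorial : ℝ) / ∏ i, ((k i).factorial : ℝ)) *
      (∏ i, ∏ l ∈ Finset.range (k i), (g i l)) / D)

lemma dmPmf_eq (m x : ℕ) (c : ℝ) (hc : 0 < c) (α : Fin (m + 1) → ℝ)
    (hα : ∀ i, 0 < α i) (hsum : ∑ i, α i = c) (k : Fin (m + 1) → ℕ) :
    dmPmf m x α k = ((x.factorial : ℝ) / ∏ i, ((k i).factorial : ℝ)) *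
      (∏ i, ∏ l ∈ Finset.range (k i), (α i + l)) / ∏ l ∈ Finset.range x, (c + l) := by
  unfold dmPmf
  rw [hsum]
  have h1 : (∏ i, Real.Gamma ((k i : ℝ) + α i))
      = (∏ i, ∏ l ∈ Finset.range (k i), (α i + l)) * ∏ i, Real.Gamma (α i) := by
    rw [← Finset.prod_mul_distrib]
    exact Finset.prod_congr rfl fun i _ => gamma_nat_add _ (hα i) _
  rw [h1, gamma_nat_add c hc x]
  have h2 : Real.Gamma c ≠ 0 := (Real.Gamma_pos_of_pos hc).ne'
  have h3 : (∏ i, Real.Gamma (α i)) ≠ 0 :=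
    Finset.prod_ne_zero_iff.2 fun i _ => (Real.Gamma_pos_of_pos (hα i)).ne'
  field_simp

lemma dmExp_eq_dmSum (m x : ℕ) (c : ℝ) (hc : 0 < c) (α : Fin (m + 1) → ℝ)
    (hα : ∀ i, 0 < α i) (hsum : ∑ i, α i = c) (f : (Fin (m + 1) → ℕ) → ℝ) :
    dmExp m x α f = dmSum m x (∏ l ∈ Finset.range x, (c + l)) f (fun i l => α i + l) := by
  unfold dmExp dmSum
  exact Finset.sum_congr rfl fun k _ => by rw [dmPmf_eq m x c hc α hα hsum k]

lemma dmSum_factor (m x : ℕ) (D : ℝ) (f : (Fin (m + 1) → ℕ) → ℝ) (p : Fin (m + 1))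
    (a : Fin (m + 1) → ℝ) (hf : ∀ k, k p = 0 → f k = 0) :
    dmSum m x D f (fun i l => a i + l)
      = a p * dmSum m x D f (fun i l => if i = p ∧ l = 0 then 1 else a i + l) := by
  unfold dmSum
  rw [Finset.mul_sum]
  refine Finset.sum_congr rfl fun k _ => ?_
  rcases Nat.eq_zero_or_pos (k p) with h0 | h0
  · rw [hf k h0]; ring
  · have key : (∏ i, ∏ l ∈ Finset.range (k i), (a i + l))
        = a p * ∏ i, ∏ l ∈ Finset.range (k i),
            (if i = p ∧ l = 0 then 1 else a i + l) := by
      rw [← Finset.prod_erase_mul _ _ (Finset.mem_univ p),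
          ← Finset.prod_erase_mul _ _ (Finset.mem_univ p)]
      have he : ∀ i ∈ Finset.univ.erase p,
          (∏ l ∈ Finset.range (k i), (a i + l))
            = ∏ l ∈ Finset.range (k i), (if i = p ∧ l = 0 then 1 else a i + l) := by
        intro i hi
        refine Finset.prod_congr rfl fun l _ => ?_
        rw [if_neg]
        simp [(Finset.mem_erase.1 hi).1]
      rw [Finset.prod_congr rfl he]
      obtain ⟨s, hs⟩ := Nat.exists_eq_succ_of_ne_zero h0.ne'
      rw [hs, Finset.prod_range_succ', Finset.prod_range_succ']
      simp only [Nat.succ_ne_zero, and_false, if_false, and_self, if_true, Nat.cast_zero,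
        add_zero, Nat.cast_add, Nat.cast_one]
      ring
    rw [key]; ring

lemma dmSum_zero (m x : ℕ) (D : ℝ) (f : (Fin (m + 1) → ℕ) → ℝ)
    (g : Fin (m + 1) → ℕ → ℝ) (q : Fin (m + 1))
    (hf : ∀ k, k q = 0 → f k = 0) (hg : g q 0 = 0) :
    dmSum m x D f g = 0 := by
  unfold dmSum
  refine Finset.sum_eq_zero fun k _ => ?_
  rcases Nat.eq_zero_or_pos (k q) with h0 | h0
  · rw [hf k h0]; ring
  · have : (∏ i, ∏ l ∈ Finset.range (k i), g i l) = 0 :=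
      Finset.prod_eq_zero (Finset.mem_univ q)
        (Finset.prod_eq_zero (Finset.mem_range.2 h0) hg)
    rw [this]; ring

lemma continuous_dmSum (m x : ℕ) (D : ℝ) (f : (Fin (m + 1) → ℕ) → ℝ)
    (g : Fin (m + 1) → ℕ → ℝ → ℝ) (hg : ∀ i l, Continuous (g i l)) :
    Continuous fun a : Fin (m + 1) → ℝ =>
      dmSum m x D f (fun i l => g i l (a i)) := by
  unfold dmSum
  refine continuous_finset_sum _ fun k _ => ?_
  refine continuous_const.mul ?_
  refine Continuous.div_const (continuous_const.mul ?_) D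
  refine continuous_finset_prod _ fun i _ => ?_
  exact continuous_finset_prod _ fun l _ => (hg i l).comp (continuous_apply i)


/-- for `(Δ_0^h,…,Δ_m^h) ~ DM(x; cπ_0(h),…,cπ_m(h))` and all `i ≠ j` in
`{1,…,m}`, `lim_{h→0+} h⁻¹ Cov(Δ_i^h, Δ_j^h) = 0`. -/
theorem dm_infinitesimal_covariance_zero
    (m : ℕ) (hm : 2 ≤ m) (r : Fin m → ℝ → ℝ)
    (hr_cont : ∀ i, Continuous (r i)) (hr_pos : ∀ i s, 0 < r i s)
    (t c : ℝ) (hc : 0 < c) (x : ℕ) (hx : 1 ≤ x) (i j : Fin m) (hij : i ≠ j) :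
    Tendsto (fun h : ℝ => h⁻¹ *
        (dmExp m x (alphaVec m r t c h) (fun k => (k i.succ : ℝ) * (k j.succ : ℝ))
          - dmExp m x (alphaVec m r t c h) (fun k => (k i.succ : ℝ))
            * dmExp m x (alphaVec m r t c h) (fun k => (k j.succ : ℝ))))
      (𝓝[>] (0 : ℝ)) (𝓝 0) := by
  have hm0 : 0 < m := lt_of_lt_of_le two_pos hm
  haveI : NeZero m := ⟨hm0.ne'⟩
  set S : ℝ := ∑ j, r j t with hS
  have hSpos : 0 < S := Finset.sum_pos (fun j _ => hr_pos j t) Finset.univ_nonempty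
  set I : ℝ → ℝ := fun h => ∑ j, ∫ s in t..(t + h), r j s with hI
  set g : ℝ → ℝ := fun h => 1 - Real.exp (-(I h)) with hg
  -- derivative of I at 0
  have hIderiv : HasDerivAt I S 0 := by
    have : HasDerivAt I (∑ j, r j t) 0 := by
      apply HasDerivAt.fun_sum
      intro j _
      have h1 : HasDerivAt (fun u : ℝ => ∫ s in t..u, r j s) (r j t) t :=
        intervalIntegral.integral_hasDerivAt_right
          ((hr_cont j).intervalIntegrable _ _)
          ((hr_cont j).stronglyMeasurableAtFilter _ _)
          (hr_cont j).continuousAt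
      have h2 : HasDerivAt (fun h : ℝ => t + h) 1 (0:ℝ) := by
        simpa using (hasDerivAt_id (0:ℝ)).const_add t
      have h1' : HasDerivAt (fun u : ℝ => ∫ s in t..u, r j s) (r j t)
          ((fun h : ℝ => t + h) 0) := by simpa using h1
      have h3 := h1'.comp (0:ℝ) h2
      simp [Function.comp] at h3; exact h3
    exact this
  have hI0 : I 0 = 0 := by simp [hI]
  have hgderiv : HasDerivAt g S 0 := by
    have h1 : HasDerivAt (fun h => Real.exp (-(I h))) (-S) 0 := by
      have := (Real.hasDerivAt_exp (-(I 0))).comp 0 hIderiv.neg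
      simp [hI0] at this; exact this
    have h2 := (hasDerivAt_const (0:ℝ) (1:ℝ)).sub h1; simp at h2; exact h2
  have hg0 : g 0 = 0 := by simp [hg, hI0]
  -- positivity for h > 0
  have hIpos : ∀ h : ℝ, 0 < h → 0 < I h := by
    intro h hh
    refine Finset.sum_pos (fun j _ => ?_) Finset.univ_nonempty
    refine intervalIntegral.intervalIntegral_pos_of_pos_on
      ((hr_cont j).intervalIntegrable _ _) (fun s _ => hr_pos j s) (by linarith)
  have hgpos : ∀ h : ℝ, 0 < h → 0 < g h := by
    intro h hh
    have := Real.exp_lt_one_iff.2 (neg_lt_zero.2 (hIpos h hh))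
    simp only [hg]; linarith
  have hglt : ∀ h : ℝ, g h < 1 := by
    intro h
    have := Real.exp_pos (-(I h))
    simp only [hg]; linarith
  have hpmain : ∀ h (i' : Fin m), pmain m r t h i' = g h * r i' t / S := fun _ _ => rfl
  have hpsum : ∀ h : ℝ, (∑ i', pmain m r t h i') = g h := by
    intro h
    simp only [hpmain]
    rw [← Finset.sum_div]
    rw [← Finset.mul_sum, ← hS, mul_div_assoc, div_self hSpos.ne', mul_one]
  -- sum of alphaVec is c
  have hasum : ∀ h : ℝ, ∑ i', alphaVec m r t c h i' = c := by
    intro h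
    rw [alphaVec, Fin.sum_cons, ← Finset.mul_sum, hpsum]
    ring
  have hapos : ∀ h : ℝ, 0 < h → ∀ i', 0 < alphaVec m r t c h i' := by
    intro h hh i'
    refine Fin.cases ?_ ?_ i'
    · simp only [alphaVec, Fin.cons_zero]
      rw [hpsum]
      exact mul_pos hc (by linarith [hglt h])
    · intro i''
      simp only [alphaVec, Fin.cons_succ, hpmain]
      exact mul_pos hc (div_pos (mul_pos (hgpos h hh) (hr_pos i'' t)) hSpos)
  set D : ℝ := ∏ l ∈ Finset.range x, (c + l) with hD
  set p : Fin (m + 1) := i.succ with hp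
  set q : Fin (m + 1) := j.succ with hq
  have hpq : q ≠ p := fun hqp => hij (Fin.succ_injective m hqp.symm)
  set fij : (Fin (m + 1) → ℕ) → ℝ := fun k => (k p : ℝ) * (k q : ℝ) with hfij
  set fi : (Fin (m + 1) → ℕ) → ℝ := fun k => (k p : ℝ) with hfi
  set fj : (Fin (m + 1) → ℕ) → ℝ := fun k => (k q : ℝ) with hfj
  have hfij0 : ∀ k, k p = 0 → fij k = 0 := by intro k hk; simp [hfij, hk]
  have hfij0q : ∀ k, k q = 0 → fij k = 0 := by intro k hk; simp [hfij, hk]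
  have hfi0 : ∀ k, k p = 0 → fi k = 0 := by intro k hk; simp [hfi, hk]
  have hfj0 : ∀ k, k q = 0 → fj k = 0 := by intro k hk; simp [hfj, hk]
  -- the limit vector
  set astar : Fin (m + 1) → ℝ := Fin.cons c (fun _ => 0) with hastar
  -- continuous functions of a
  set Fij' : (Fin (m + 1) → ℝ) → ℝ := fun a =>
    dmSum m x D fij (fun i' l => if i' = p ∧ l = 0 then 1 else a i' + l) with hFij'
  set Fi' : (Fin (m + 1) → ℝ) → ℝ := fun a =>
    dmSum m x D fi (fun i' l => if i' = p ∧ l = 0 then 1 else a i' + l) with hFi'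
  set Fj : (Fin (m + 1) → ℝ) → ℝ := fun a =>
    dmSum m x D fj (fun i' l => a i' + l) with hFj
  have hFij'cont : Continuous Fij' :=
    continuous_dmSum m x D fij (fun i' l => fun v => if i' = p ∧ l = 0 then 1 else v + l)
      (fun i' l => by
        by_cases hc' : i' = p ∧ l = 0
        · simp only [if_pos hc']; exact continuous_const
        · simp only [if_neg hc']; exact continuous_id.add continuous_const)
  have hFi'cont : Continuous Fi' :=
    continuous_dmSum m x D fi (fun i' l => fun v => if i' = p ∧ l = 0 then 1 else v + l)
      (fun i' l => by
        by_cases hc' : i' = p ∧ l = 0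
        · simp only [if_pos hc']; exact continuous_const
        · simp only [if_neg hc']; exact continuous_id.add continuous_const)
  have hFjcont : Continuous Fj :=
    continuous_dmSum m x D fj (fun i' l => fun v => v + l)
      (fun i' l => continuous_id.add continuous_const)
  -- vanishing at astar
  have hastarq : astar q = 0 := by simp [hastar, hq, Fin.cons_succ]
  have hFij'zero : Fij' astar = 0 := by
    apply dmSum_zero m x D fij _ q hfij0q
    rw [if_neg (by simp [hpq])]
    simp [hastarq]
  have hFjzero : Fj astar = 0 := by
    apply dmSum_zero m x D fj _ q hfj0
    simp [hastarq]
  -- tendsto of alphaVec to astar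
  have halpha : Tendsto (fun h => alphaVec m r t c h) (𝓝[>] (0:ℝ)) (𝓝 astar) := by
    rw [tendsto_pi_nhds]
    have hgt : Tendsto g (𝓝[>] (0:ℝ)) (𝓝 0) := by
      have := hgderiv.continuousAt.continuousWithinAt (s := Set.Ioi (0:ℝ))
      rw [ContinuousWithinAt, hg0] at this
      exact this
    intro i'
    refine Fin.cases ?_ ?_ i'
    · simp only [alphaVec, Fin.cons_zero, hastar]
      have : Tendsto (fun h => c * (1 - ∑ i'', pmain m r t h i'')) (𝓝[>] (0:ℝ))
          (𝓝 (c * (1 - 0))) := by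
        refine Tendsto.const_mul c (Tendsto.const_sub 1 ?_)
        simp only [hpsum]
        exact hgt
      simpa using this
    · intro i''
      simp only [alphaVec, Fin.cons_succ, hastar, hpmain]
      have : Tendsto (fun h => c * (g h * r i'' t / S)) (𝓝[>] (0:ℝ))
          (𝓝 (c * (0 * r i'' t / S))) :=
        Tendsto.const_mul c (Tendsto.div_const (Tendsto.mul_const _ hgt) S)
      simpa using this
  -- slope limit
  have hslope : Tendsto (fun h : ℝ => h⁻¹ * g h) (𝓝[>] (0:ℝ)) (𝓝 S) := by
    have := hasDerivAt_iff_tendsto_slope.1 hgderiv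
    have h2 := this.mono_left (nhdsWithin_mono _ (by
      intro y hy
      simp only [Set.mem_compl_iff, Set.mem_singleton_iff]
      exact ne_of_gt hy))
    refine h2.congr ?_
    intro h
    simp [slope, hg0, div_eq_inv_mul]
  have hap : Tendsto (fun h : ℝ => h⁻¹ * alphaVec m r t c h p) (𝓝[>] (0:ℝ))
      (𝓝 (S * (c * r i t / S))) := by
    have heq : ∀ h : ℝ, h⁻¹ * alphaVec m r t c h p = (h⁻¹ * g h) * (c * r i t / S) := by
      intro h
      simp only [alphaVec, hp, Fin.cons_succ, hpmain]
      ring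
    simp only [heq]
    exact hslope.mul_const _
  -- eventual equality
  have heventually : ∀ᶠ h in 𝓝[>] (0:ℝ),
      h⁻¹ * (dmExp m x (alphaVec m r t c h) (fun k => (k i.succ : ℝ) * (k j.succ : ℝ))
          - dmExp m x (alphaVec m r t c h) (fun k => (k i.succ : ℝ))
            * dmExp m x (alphaVec m r t c h) (fun k => (k j.succ : ℝ)))
        = (h⁻¹ * alphaVec m r t c h p) *
            (Fij' (alphaVec m r t c h)
              - Fi' (alphaVec m r t c h) * Fj (alphaVec m r t c h)) := by
    filter_upwards [self_mem_nhdsWithin] with h hh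
    have hh' : (0:ℝ) < h := hh
    have e1 : dmExp m x (alphaVec m r t c h) (fun k => (k i.succ : ℝ) * (k j.succ : ℝ))
        = alphaVec m r t c h p * Fij' (alphaVec m r t c h) := by
      rw [dmExp_eq_dmSum m x c hc _ (hapos h hh') (hasum h) fij,
        dmSum_factor m x D fij p _ hfij0]
    have e2 : dmExp m x (alphaVec m r t c h) (fun k => (k i.succ : ℝ))
        = alphaVec m r t c h p * Fi' (alphaVec m r t c h) := by
      rw [dmExp_eq_dmSum m x c hc _ (hapos h hh') (hasum h) fi,
        dmSum_factor m x D fi p _ hfi0]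
    have e3 : dmExp m x (alphaVec m r t c h) (fun k => (k j.succ : ℝ))
        = Fj (alphaVec m r t c h) := by
      rw [dmExp_eq_dmSum m x c hc _ (hapos h hh') (hasum h) fj]
    rw [e1, e2, e3]
    ring
  rw [tendsto_congr' heventually]
  have hlim : Tendsto (fun h : ℝ => (h⁻¹ * alphaVec m r t c h p) *
      (Fij' (alphaVec m r t c h)
        - Fi' (alphaVec m r t c h) * Fj (alphaVec m r t c h))) (𝓝[>] (0:ℝ))
      (𝓝 ((S * (c * r i t / S)) * (Fij' astar - Fi' astar * Fj astar))) :=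
    hap.mul (((hFij'cont.tendsto astar).comp halpha).sub
      (((hFi'cont.tendsto astar).comp halpha).mul ((hFjcont.tendsto astar).comp halpha)))
  rw [hFij'zero, hFjzero] at hlim
  simpa using hlim
end

section
/- Fix an integer x ≥ 1, and for each h > 0 let (Δ_0^h,…,Δ_m^h) be a random vector with the Dirichlet-multinomial distribution DM(x; cπ_0(h), cπ_1(h),…,cπ_m(h)). Let (k_0,…,k_m) be nonnegative integers with Σ_{i=0}^m k_i = x and set S = {i ∈ {1,…,m} : k_i ≥ 1}. If |S| ≥ 2, then P((Δ_0^h,…,Δ_m^h) = (k_0,…,k_m)) = o(h) as h → 0+. If S = {i} for a single index i with k_i = k ≥ 1 (so k_0 = x − k), then P((Δ_0^h,…,Δ_m^h) = (k_0,…,k_m)) = c·C(x,k)·[Γ(k)·Γ(x−k+c)/Γ(x+c)]·r_i(t)·h + o(h) as h → 0+. -/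
open scoped BigOperators
open Filter Topology Asymptotics

noncomputable def polyProd (k : ℕ) (a : ℝ) : ℝ := ∏ j ∈ Finset.range k, (a + j)

lemma gammaRatio (n : ℕ) {a : ℝ} (ha : 0 < a) :
    Real.Gamma ((n : ℝ) + a) = polyProd n a * Real.Gamma a := by
  induction n with
  | zero => simp [polyProd]
  | succ n ih =>
    have h1 : ((n+1 : ℕ) : ℝ) + a = ((n:ℝ) + a) + 1 := by push_cast; ring
    have h2 : (n:ℝ) + a ≠ 0 := by positivity
    rw [h1, Real.Gamma_add_one h2, ih]
    unfold polyProd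
    rw [Finset.prod_range_succ]
    ring

lemma polyProd_succ' (n : ℕ) (a : ℝ) :
    polyProd (n+1) a = (∏ j ∈ Finset.range n, (a + ((j:ℝ)+1))) * a := by
  unfold polyProd
  rw [Finset.prod_range_succ']
  push_cast; simp

lemma polyProd_zero_of_pos {n : ℕ} (hn : 1 ≤ n) : polyProd n 0 = 0 := by
  obtain ⟨n', rfl⟩ := Nat.exists_eq_add_of_le hn
  rw [Nat.add_comm, polyProd_succ', mul_zero]

lemma prod_add_one_eq_factorial (n : ℕ) :
    (∏ j ∈ Finset.range n, ((0:ℝ) + ((j:ℝ)+1))) = n.factorial := by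
  induction n with
  | zero => simp
  | succ n ih => rw [Finset.prod_range_succ, ih, Nat.factorial_succ]; push_cast; ring

lemma differentiable_polyProd (n : ℕ) : Differentiable ℝ (polyProd n) := by
  intro a
  exact DifferentiableAt.fun_finsetProd (fun j _ => (differentiableAt_id.add_const _))

lemma integral_hasDerivAt (f : ℝ → ℝ) (hf : Continuous f) (t : ℝ) :
    HasDerivAt (fun h : ℝ => ∫ s in t..(t+h), f s) (f t) 0 := by
  have h1 : HasDerivAt (fun u => ∫ s in t..u, f s) (f t) t :=
    intervalIntegral.integral_hasDerivAt_right (hf.intervalIntegrable _ _)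
      (hf.stronglyMeasurable.stronglyMeasurableAtFilter) hf.continuousAt
  have h2 : HasDerivAt (fun h : ℝ => t + h) 1 0 := by
    simpa using (hasDerivAt_id (0:ℝ)).const_add t
  have h1' : HasDerivAt (fun u => ∫ s in t..u, f s) (f t) ((fun h : ℝ => t + h) 0) := by
    simpa using h1
  have := h1'.comp 0 h2
  rw [mul_one] at this
  exact this

/-- for `(Δ_0^h,…,Δ_m^h) ~ DM(x; cπ_0(h),…,cπ_m(h))` and a fixed vector
`(k_0,…,k_m)` with `∑ k_i = x`, let `S = {i ∈ {1,…,m} : k_i ≥ 1}`.  If `|S| ≥ 2` then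
`P(Δ^h = k) = o(h)`; if `S = {i}` with `k_i = k ≥ 1` then
`P(Δ^h = k) = c·C(x,k)·[Γ(k)Γ(x−k+c)/Γ(x+c)]·r_i(t)·h + o(h)` as `h → 0+`. -/
theorem dm_transition_rates
    (m : ℕ) (hm : 1 ≤ m) (r : Fin m → ℝ → ℝ)
    (hr_cont : ∀ i, Continuous (r i)) (hr_pos : ∀ i s, 0 < r i s)
    (t c : ℝ) (hc : 0 < c) (x : ℕ) (hx : 1 ≤ x)
    (k : Fin (m + 1) → ℕ) (hsum : ∑ j, k j = x) :
    (2 ≤ (Finset.univ.filter fun i : Fin m => 1 ≤ k i.succ).card →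
      (fun h : ℝ => dmPmf m x (alphaVec m r t c h) k) =o[𝓝[>] (0 : ℝ)] (fun h => h)) ∧
    (∀ i : Fin m, (Finset.univ.filter fun i' : Fin m => 1 ≤ k i'.succ) = {i} →
      (fun h : ℝ => dmPmf m x (alphaVec m r t c h) k
          - c * (x.choose (k i.succ) : ℝ) *
              (Real.Gamma (k i.succ : ℝ) * Real.Gamma ((x : ℝ) - (k i.succ : ℝ) + c)
                / Real.Gamma ((x : ℝ) + c)) * r i t * h)
        =o[𝓝[>] (0 : ℝ)] (fun h => h)) := by
  have hR : 0 < ∑ j, r j t :=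
    Finset.sum_pos (fun j _ => hr_pos j t) ⟨⟨0, hm⟩, Finset.mem_univ _⟩
  -- derivative of A(h) = ∑ ∫
  have hA : HasDerivAt (fun h : ℝ => ∑ j, ∫ s in t..(t+h), r j s) (∑ j, r j t) 0 :=
    HasDerivAt.fun_sum (fun j _ => integral_hasDerivAt (r j) (hr_cont j) t)
  have hApos : ∀ h : ℝ, 0 < h → 0 < ∑ j, ∫ s in t..(t+h), r j s := fun h hh =>
    Finset.sum_pos (fun j _ => intervalIntegral.intervalIntegral_pos_of_pos
      ((hr_cont j).intervalIntegrable _ _) (fun s => hr_pos j s) (by linarith))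
      ⟨⟨0, hm⟩, Finset.mem_univ _⟩
  -- sum of pmain
  have hsum_pmain : ∀ h : ℝ, (∑ i, pmain m r t h i)
      = 1 - Real.exp (-(∑ j, ∫ s in t..(t+h), r j s)) := by
    intro h
    unfold pmain
    rw [← Finset.sum_div, ← Finset.mul_sum]
    field_simp
  have hα0_eq : ∀ h : ℝ, alphaVec m r t c h 0
      = c * Real.exp (-(∑ j, ∫ s in t..(t+h), r j s)) := by
    intro h
    simp only [alphaVec, Fin.cons_zero, hsum_pmain]
    ring
  have hαsucc_eq : ∀ (h : ℝ) (i : Fin m), alphaVec m r t c h i.succ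
      = c * ((1 - Real.exp (-(∑ j, ∫ s in t..(t+h), r j s))) * r i t / (∑ j, r j t)) := by
    intro h i
    simp [alphaVec, Fin.cons_succ, pmain]
  have hα0_pos : ∀ h : ℝ, 0 < alphaVec m r t c h 0 := by
    intro h
    rw [hα0_eq]
    positivity
  have hαsucc_pos : ∀ h : ℝ, 0 < h → ∀ i : Fin m, 0 < alphaVec m r t c h i.succ := by
    intro h hh i
    rw [hαsucc_eq]
    have h1 : Real.exp (-(∑ j, ∫ s in t..(t+h), r j s)) < 1 :=
      Real.exp_lt_one_iff.mpr (by linarith [hApos h hh])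
    have h1' : 0 < 1 - Real.exp (-(∑ j, ∫ s in t..(t+h), r j s)) := by linarith
    exact mul_pos hc (div_pos (mul_pos h1' (hr_pos i t)) hR)
  have hαpos : ∀ h : ℝ, 0 < h → ∀ j : Fin (m+1), 0 < alphaVec m r t c h j := by
    intro h hh j
    induction j using Fin.cases with
    | zero => exact hα0_pos h
    | succ i => exact hαsucc_pos h hh i
  have hαsum : ∀ h : ℝ, ∑ j, alphaVec m r t c h j = c := by
    intro h
    rw [show (∑ j, alphaVec m r t c h j) = alphaVec m r t c h 0
        + ∑ i : Fin m, alphaVec m r t c h i.succ from Fin.sum_univ_succ _]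
    simp only [alphaVec, Fin.cons_zero, Fin.cons_succ]
    rw [← Finset.mul_sum]
    ring
  -- derivatives of components
  have hE : HasDerivAt (fun h : ℝ => 1 - Real.exp (-(∑ j, ∫ s in t..(t+h), r j s)))
      (∑ j, r j t) 0 := by
    have h1 := (hA.neg.exp).const_sub 1
    simpa using h1
  have hαsuccDeriv : ∀ i : Fin m,
      HasDerivAt (fun h => alphaVec m r t c h i.succ) (c * r i t) 0 := by
    intro i
    have h1 := ((hE.mul_const (r i t)).div_const (∑ j, r j t)).const_mul c
    rw [show c * ((∑ j, r j t) * r i t / (∑ j, r j t)) = c * r i t from by field_simp] at h1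
    have h2 : (fun h => alphaVec m r t c h i.succ)
        = fun h : ℝ => c * ((1 - Real.exp (-(∑ j, ∫ s in t..(t+h), r j s))) * r i t
            / (∑ j, r j t)) := funext fun h => hαsucc_eq h i
    rw [h2]
    exact h1
  have hα0Diff : DifferentiableAt ℝ (fun h => alphaVec m r t c h 0) 0 := by
    have h2 : (fun h => alphaVec m r t c h 0)
        = fun h : ℝ => c * Real.exp (-(∑ j, ∫ s in t..(t+h), r j s)) :=
      funext fun h => hα0_eq h
    rw [h2]
    exact ((hA.neg.exp).const_mul c).differentiableAt
  have hα00 : alphaVec m r t c 0 0 = c := by rw [hα0_eq]; simp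
  have hαsucc0 : ∀ i : Fin m, alphaVec m r t c 0 i.succ = 0 := by
    intro i; rw [hαsucc_eq]; simp
  have hαdiff : ∀ j : Fin (m+1), DifferentiableAt ℝ (fun h => alphaVec m r t c h j) 0 := by
    intro j
    induction j using Fin.cases with
    | zero => exact hα0Diff
    | succ i => exact (hαsuccDeriv i).differentiableAt
  have hpolydiff : ∀ (j : Fin (m+1)) (n : ℕ),
      DifferentiableAt ℝ (fun h => polyProd n (alphaVec m r t c h j)) 0 :=
    fun j n => (differentiable_polyProd n _).comp 0 (hαdiff j)
  -- key pmf formula for h > 0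
  have key : ∀ h : ℝ, 0 < h → dmPmf m x (alphaVec m r t c h) k
      = ((x.factorial : ℝ) / ∏ j, ((k j).factorial : ℝ))
        * (Real.Gamma c / Real.Gamma ((x:ℝ) + c))
        * ∏ j, polyProd (k j) (alphaVec m r t c h j) := by
    intro h hh
    have hpos := hαpos h hh
    have hne : ∀ j : Fin (m+1), Real.Gamma (alphaVec m r t c h j) ≠ 0 :=
      fun j => (Real.Gamma_pos_of_pos (hpos j)).ne'
    have hprodne : (∏ j, Real.Gamma (alphaVec m r t c h j)) ≠ 0 :=
      Finset.prod_ne_zero_iff.mpr fun j _ => hne j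
    unfold dmPmf
    rw [hαsum h, Finset.prod_congr rfl (fun j _ => gammaRatio (k j) (hpos j)),
      Finset.prod_mul_distrib]
    have hΓx : Real.Gamma ((x:ℝ) + c) ≠ 0 := (Real.Gamma_pos_of_pos (by positivity)).ne'
    field_simp
  constructor
  · -- case |S| ≥ 2
    intro hcard
    obtain ⟨i₁, hi₁, i₂, hi₂, hne12⟩ := Finset.one_lt_card.mp hcard
    have hK₁ : 1 ≤ k i₁.succ := (Finset.mem_filter.mp hi₁).2
    have hK₂ : 1 ≤ k i₂.succ := (Finset.mem_filter.mp hi₂).2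
    have hmem2 : i₂.succ ∈ Finset.univ \ {i₁.succ} :=
      Finset.mem_sdiff.mpr ⟨Finset.mem_univ _, by
        simp only [Finset.mem_singleton]
        exact fun hcontra => hne12 (Fin.succ_injective m hcontra).symm⟩
    have hsplit : ∀ h : ℝ, (∏ j, polyProd (k j) (alphaVec m r t c h j))
        = polyProd (k i₁.succ) (alphaVec m r t c h i₁.succ)
          * (polyProd (k i₂.succ) (alphaVec m r t c h i₂.succ)
            * ∏ j ∈ (Finset.univ \ {i₁.succ}) \ {i₂.succ},
                polyProd (k j) (alphaVec m r t c h j)) := by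
      intro h
      rw [Finset.prod_eq_mul_prod_sdiff_singleton_of_mem (Finset.mem_univ i₁.succ)]
      congr 1
      rw [Finset.prod_eq_mul_prod_sdiff_singleton_of_mem hmem2]
    have hf1O : (fun h => polyProd (k i₁.succ) (alphaVec m r t c h i₁.succ))
        =O[𝓝 (0:ℝ)] (fun h => h) := by
      have hd := (hpolydiff i₁.succ (k i₁.succ)).hasDerivAt.hasFDerivAt.isBigO_sub
      simpa [hαsucc0 i₁, polyProd_zero_of_pos hK₁] using hd
    have hrest : (fun h => polyProd (k i₂.succ) (alphaVec m r t c h i₂.succ)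
        * ∏ j ∈ (Finset.univ \ {i₁.succ}) \ {i₂.succ},
            polyProd (k j) (alphaVec m r t c h j)) =o[𝓝 (0:ℝ)] (fun _ => (1:ℝ)) := by
      rw [isLittleO_one_iff]
      have hcont : ContinuousAt (fun h => polyProd (k i₂.succ) (alphaVec m r t c h i₂.succ)
          * ∏ j ∈ (Finset.univ \ {i₁.succ}) \ {i₂.succ},
              polyProd (k j) (alphaVec m r t c h j)) 0 :=
        ((hpolydiff i₂.succ (k i₂.succ)).continuousAt).mul
          (DifferentiableAt.fun_finsetProd (fun j _ => hpolydiff j (k j))).continuousAt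
      have := hcont.tendsto
      rwa [show polyProd (k i₂.succ) (alphaVec m r t c 0 i₂.succ)
          * (∏ j ∈ (Finset.univ \ {i₁.succ}) \ {i₂.succ},
              polyProd (k j) (alphaVec m r t c 0 j)) = 0 from by
        rw [hαsucc0 i₂, polyProd_zero_of_pos hK₂, zero_mul]] at this
    have hcomb := (hf1O.mul_isLittleO hrest).const_mul_left
      (((x.factorial : ℝ) / ∏ j, ((k j).factorial : ℝ))
        * (Real.Gamma c / Real.Gamma ((x:ℝ) + c)))
    have hcomb' : (fun h : ℝ => ((x.factorial : ℝ) / ∏ j, ((k j).factorial : ℝ))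
        * (Real.Gamma c / Real.Gamma ((x:ℝ) + c))
        * (polyProd (k i₁.succ) (alphaVec m r t c h i₁.succ)
          * (polyProd (k i₂.succ) (alphaVec m r t c h i₂.succ)
            * ∏ j ∈ (Finset.univ \ {i₁.succ}) \ {i₂.succ},
                polyProd (k j) (alphaVec m r t c h j)))) =o[𝓝 (0:ℝ)] (fun h => h) := by
      simpa only [mul_one] using hcomb
    refine (hcomb'.mono nhdsWithin_le_nhds).congr' ?_ Filter.EventuallyEq.rfl
    filter_upwards [self_mem_nhdsWithin] with h hh
    rw [key h hh, hsplit h]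
  · intro i hfil
    have hKmem : i ∈ Finset.filter (fun i' : Fin m => 1 ≤ k i'.succ) Finset.univ := by
      rw [hfil]; exact Finset.mem_singleton_self i
    have hK : 1 ≤ k i.succ := (Finset.mem_filter.mp hKmem).2
    have hkz : ∀ j : Fin m, j ≠ i → k j.succ = 0 := by
      intro j hj
      by_contra hne
      have h1 : 1 ≤ k j.succ := Nat.one_le_iff_ne_zero.mpr hne
      have hmem : j ∈ Finset.filter (fun i' : Fin m => 1 ≤ k i'.succ) Finset.univ :=
        Finset.mem_filter.mpr ⟨Finset.mem_univ _, h1⟩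
      rw [hfil, Finset.mem_singleton] at hmem
      exact hj hmem
    have hsum' : k 0 + k i.succ = x := by
      rw [Fin.sum_univ_succ] at hsum
      rw [← hsum]
      congr 1
      exact (Finset.sum_eq_single_of_mem i (Finset.mem_univ _)
        (fun j _ hj => hkz j hj)).symm
    obtain ⟨n, hn⟩ : ∃ n, k i.succ = n + 1 :=
      ⟨k i.succ - 1, (Nat.succ_pred_eq_of_pos hK).symm⟩
    have hprod : ∀ h : ℝ, (∏ j, polyProd (k j) (alphaVec m r t c h j))
        = polyProd (k 0) (alphaVec m r t c h 0)
          * polyProd (k i.succ) (alphaVec m r t c h i.succ) := by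
      intro h
      rw [Fin.prod_univ_succ]
      congr 1
      exact Finset.prod_eq_single_of_mem i (Finset.mem_univ _)
        (fun j _ hj => by rw [hkz j hj]; simp [polyProd])
    have hu : HasDerivAt (fun h => polyProd (k i.succ) (alphaVec m r t c h i.succ))
        ((n.factorial : ℝ) * (c * r i t)) 0 := by
      have hfun : (fun h => polyProd (k i.succ) (alphaVec m r t c h i.succ))
          = fun h : ℝ => (∏ j ∈ Finset.range n, (alphaVec m r t c h i.succ + ((j:ℝ)+1)))
              * alphaVec m r t c h i.succ := by
        funext h; rw [hn, polyProd_succ']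
      rw [hfun]
      have hQ : DifferentiableAt ℝ
          (fun h => ∏ j ∈ Finset.range n, (alphaVec m r t c h i.succ + ((j:ℝ)+1))) 0 :=
        DifferentiableAt.fun_finsetProd
          (fun j _ => ((hαsuccDeriv i).differentiableAt).add_const _)
      have hmul := hQ.hasDerivAt.mul (hαsuccDeriv i)
      have hd : deriv (fun h => ∏ j ∈ Finset.range n,
            (alphaVec m r t c h i.succ + ((j:ℝ)+1))) 0 * alphaVec m r t c 0 i.succ
          + (∏ j ∈ Finset.range n, (alphaVec m r t c 0 i.succ + ((j:ℝ)+1))) * (c * r i t)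
          = (n.factorial : ℝ) * (c * r i t) := by
        rw [hαsucc0 i, prod_add_one_eq_factorial]
        ring
      exact hd ▸ hmul
    have hG : HasDerivAt (fun h : ℝ => ((x.factorial : ℝ) / ∏ j, ((k j).factorial : ℝ))
        * (Real.Gamma c / Real.Gamma ((x:ℝ) + c))
        * (polyProd (k 0) (alphaVec m r t c h 0)
          * polyProd (k i.succ) (alphaVec m r t c h i.succ)))
        (((x.factorial : ℝ) / ∏ j, ((k j).factorial : ℝ))
          * (Real.Gamma c / Real.Gamma ((x:ℝ) + c))
          * (polyProd (k 0) c * ((n.factorial : ℝ) * (c * r i t)))) 0 := by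
      have hmul := (hpolydiff 0 (k 0)).hasDerivAt.mul hu
      have hcm := hmul.const_mul (((x.factorial : ℝ) / ∏ j, ((k j).factorial : ℝ))
          * (Real.Gamma c / Real.Gamma ((x:ℝ) + c)))
      refine hcm.congr_deriv ?_
      rw [hαsucc0 i, hα00, polyProd_zero_of_pos hK]
      ring
    have hG0 : ((x.factorial : ℝ) / ∏ j, ((k j).factorial : ℝ))
        * (Real.Gamma c / Real.Gamma ((x:ℝ) + c))
        * (polyProd (k 0) (alphaVec m r t c 0 0)
          * polyProd (k i.succ) (alphaVec m r t c 0 i.succ)) = 0 := by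
      rw [hαsucc0 i, polyProd_zero_of_pos hK]
      ring
    have hlit : (fun h : ℝ => ((x.factorial : ℝ) / ∏ j, ((k j).factorial : ℝ))
        * (Real.Gamma c / Real.Gamma ((x:ℝ) + c))
        * (polyProd (k 0) (alphaVec m r t c h 0)
          * polyProd (k i.succ) (alphaVec m r t c h i.succ))
        - (((x.factorial : ℝ) / ∏ j, ((k j).factorial : ℝ))
          * (Real.Gamma c / Real.Gamma ((x:ℝ) + c))
          * (polyProd (k 0) c * ((n.factorial : ℝ) * (c * r i t)))) * h)
        =o[𝓝 (0:ℝ)] (fun h => h) := by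
      have hio := hasDerivAt_iff_isLittleO.mp hG
      simp only [sub_zero, smul_eq_mul] at hio
      rw [hG0] at hio
      refine hio.congr' (Filter.Eventually.of_forall fun h => ?_) Filter.EventuallyEq.rfl
      ring
    -- identify the derivative with the target constant
    have hfact : (∏ j, ((k j).factorial : ℝ))
        = ((k 0).factorial : ℝ) * ((k i.succ).factorial : ℝ) := by
      rw [Fin.prod_univ_succ]
      congr 1
      exact Finset.prod_eq_single_of_mem i (Finset.mem_univ _)
        (fun j _ hj => by rw [hkz j hj]; simp)
    have hx0 : (x:ℝ) - (k i.succ : ℝ) = (k 0 : ℝ) := by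
      have := hsum'
      push_cast [← this]
      ring
    have hΓc : Real.Gamma c ≠ 0 := (Real.Gamma_pos_of_pos hc).ne'
    have hΓx : Real.Gamma ((x:ℝ) + c) ≠ 0 :=
      (Real.Gamma_pos_of_pos (by positivity)).ne'
    have hgamK : Real.Gamma ((k i.succ : ℝ)) = (n.factorial : ℝ) := by
      rw [hn]
      push_cast
      exact Real.Gamma_nat_eq_factorial n
    have hpc : polyProd (k 0) c = Real.Gamma ((k 0 : ℝ) + c) / Real.Gamma c := by
      rw [gammaRatio _ hc]
      field_simp
    have hchoose : (x.choose (k i.succ) : ℝ) * ((k i.succ).factorial : ℝ)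
        * ((k 0).factorial : ℝ) = (x.factorial : ℝ) := by
      have hle : k i.succ ≤ x := by omega
      have hnat := Nat.choose_mul_factorial_mul_factorial hle
      rw [show x - k i.succ = k 0 from by omega] at hnat
      exact_mod_cast hnat
    have hch' : (x.factorial : ℝ) / (((k 0).factorial : ℝ) * ((k i.succ).factorial : ℝ))
        = (x.choose (k i.succ) : ℝ) := by
      rw [← hchoose]
      have h1 : ((k 0).factorial : ℝ) ≠ 0 := Nat.cast_ne_zero.mpr (Nat.factorial_ne_zero _)
      have h2 : ((k i.succ).factorial : ℝ) ≠ 0 := Nat.cast_ne_zero.mpr (Nat.factorial_ne_zero _)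
      field_simp
    have hDeq : ((x.factorial : ℝ) / ∏ j, ((k j).factorial : ℝ))
          * (Real.Gamma c / Real.Gamma ((x:ℝ) + c))
          * (polyProd (k 0) c * ((n.factorial : ℝ) * (c * r i t)))
        = c * (x.choose (k i.succ) : ℝ) *
            (Real.Gamma (k i.succ : ℝ) * Real.Gamma ((x : ℝ) - (k i.succ : ℝ) + c)
              / Real.Gamma ((x : ℝ) + c)) * r i t := by
      rw [hfact, hx0, hgamK, hpc, hch']
      field_simp
    rw [← hDeq]
    refine (hlit.mono nhdsWithin_le_nhds).congr' ?_ Filter.EventuallyEq.rfl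
    filter_upwards [self_mem_nhdsWithin] with h hh
    rw [key h hh, hprod h]
end

section
/- Fix an integer m₁ ≥ 1 and integers x_1,…,x_{m₁} ≥ 1. For each h > 0 let Π_h be drawn from the Beta(cπ(h), c(1−π(h))) distribution and, conditionally on Π_h, let Δ_1^h,…,Δ_{m₁}^h be independent with Δ_i^h ~ Binomial(x_i, Π_h). Then for all nonnegative integers k_1,…,k_{m₁} with k_i ≤ x_i for every i and Σ_{i=1}^{m₁} k_i ≥ 1, one has P(Δ_i^h = k_i for all i) = q·h + o(h) as h → 0+, where q = c·(∏_{i=1}^{m₁} C(x_i, k_i))·[Γ(Σ_i k_i)·Γ(Σ_i x_i − Σ_i k_i + c)/Γ(Σ_i x_i + c)]·r(t), which is strictly positive. -/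
open scoped BigOperators
open Filter Topology Asymptotics

/-- The joint pmf of `(Δ_1,…,Δ_m)` where, conditionally on `Π ~ Beta(α,β)`, the `Δ_i` are
independent with `Δ_i ~ Binomial(x_i, Π)`:
`P(Δ = k) = (∏ C(x_i,k_i)) · B(∑k+α, ∑x−∑k+β)/B(α,β)`. -/
noncomputable def mbbPmf (m : ℕ) (x : Fin m → ℕ) (α β : ℝ) (k : Fin m → ℕ) : ℝ :=
  (∏ i, ((x i).choose (k i) : ℝ)) *
    betaFn ((∑ i, (k i : ℝ)) + α) ((∑ i, (x i : ℝ)) - (∑ i, (k i : ℝ)) + β) / betaFn α β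

/-- Expectation of `f(Δ_1,…,Δ_m)` under the above joint distribution. -/
noncomputable def mbbExp (m : ℕ) (x : Fin m → ℕ) (α β : ℝ) (f : (Fin m → ℕ) → ℝ) : ℝ :=
  ∑ k ∈ Fintype.piFinset (fun i => Finset.range (x i + 1)), f k * mbbPmf m x α β k

/-- Key algebraic identity for the beta-binomial pmf when `α, β > 0` and `α + β = c`. -/
lemma betaFn_key (K X c α β P : ℝ) (hα : 0 < α) (hβ : 0 < β) (hc : 0 < c)
    (hαβ : α + β = c) :
    P * betaFn (K + α) (X - K + β) / betaFn α β
      = c⁻¹ * α * c * (P * (Real.Gamma (K + α) * Real.Gamma (X - K + β) * Real.Gamma c /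
          (Real.Gamma (α + 1) * Real.Gamma β * Real.Gamma (X + c)))) := by
  have h1 : K + α + (X - K + β) = X + c := by rw [← hαβ]; ring
  have h2 : Real.Gamma (α + 1) = α * Real.Gamma α := Real.Gamma_add_one hα.ne'
  have hΓα : Real.Gamma α ≠ 0 := (Real.Gamma_pos_of_pos hα).ne'
  have hΓβ : Real.Gamma β ≠ 0 := (Real.Gamma_pos_of_pos hβ).ne'
  have hΓc : Real.Gamma c ≠ 0 := (Real.Gamma_pos_of_pos hc).ne'
  simp only [betaFn, h1, hαβ]
  rw [h2]
  by_cases hΓXc : Real.Gamma (X + c) = 0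
  · simp [hΓXc]
  field_simp

/-- with `Π_h ~ Beta(cπ(h), c(1−π(h)))` and, conditionally on `Π_h`,
independent `Δ_i^h ~ Binomial(x_i, Π_h)` for `i = 1,…,m₁`, for all `k_i ≤ x_i` with
`∑ k_i ≥ 1`: `P(Δ_i^h = k_i ∀ i) = q·h + o(h)` as `h → 0+`, where
`q = c·(∏ C(x_i,k_i))·[Γ(∑k)Γ(∑x−∑k+c)/Γ(∑x+c)]·r(t) > 0`. -/
theorem mbb_transition_rate
    (r : ℝ → ℝ) (hr_cont : Continuous r) (hr_pos : ∀ s, 0 < r s)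
    (t c : ℝ) (hc : 0 < c) (m₁ : ℕ) (hm : 1 ≤ m₁)
    (x : Fin m₁ → ℕ) (hx : ∀ i, 1 ≤ x i)
    (k : Fin m₁ → ℕ) (hk : ∀ i, k i ≤ x i) (hksum : 1 ≤ ∑ i, k i) :
    (fun h : ℝ => mbbPmf m₁ x (c * pih r t h) (c * (1 - pih r t h)) k
        - c * (∏ i, ((x i).choose (k i) : ℝ)) *
            (Real.Gamma (∑ i, (k i : ℝ)) *
                Real.Gamma ((∑ i, (x i : ℝ)) - (∑ i, (k i : ℝ)) + c)
              / Real.Gamma ((∑ i, (x i : ℝ)) + c)) * r t * h)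
      =o[𝓝[>] (0 : ℝ)] (fun h => h) ∧
    0 < c * (∏ i, ((x i).choose (k i) : ℝ)) *
          (Real.Gamma (∑ i, (k i : ℝ)) *
              Real.Gamma ((∑ i, (x i : ℝ)) - (∑ i, (k i : ℝ)) + c)
            / Real.Gamma ((∑ i, (x i : ℝ)) + c)) * r t := by
  set K : ℝ := ∑ i, (k i : ℝ) with hKdef
  set X : ℝ := ∑ i, (x i : ℝ) with hXdef
  set P : ℝ := ∏ i, ((x i).choose (k i) : ℝ) with hPdef
  have hK1 : (1:ℝ) ≤ K := by
    have h' : ((1:ℕ):ℝ) ≤ ((∑ i, k i : ℕ) : ℝ) := Nat.cast_le.mpr hksum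
    simpa [hKdef] using h'
  have hKX : K ≤ X := Finset.sum_le_sum (fun i _ => by exact_mod_cast hk i)
  have hP : 0 < P := Finset.prod_pos (fun i _ => by exact_mod_cast Nat.choose_pos (hk i))
  have hK0 : (0:ℝ) < K := lt_of_lt_of_le one_pos hK1
  have hXKc : 0 < X - K + c := by linarith
  have hXc : 0 < X + c := by linarith
  have hΓK := Real.Gamma_pos_of_pos hK0
  have hΓ1 := Real.Gamma_pos_of_pos hXKc
  have hΓ2 := Real.Gamma_pos_of_pos hXc
  have hq : 0 < c * P * (Real.Gamma K * Real.Gamma (X - K + c) / Real.Gamma (X + c)) * r t :=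
    mul_pos (mul_pos (mul_pos hc hP) (div_pos (mul_pos hΓK hΓ1) hΓ2)) (hr_pos t)
  set q : ℝ := c * P * (Real.Gamma K * Real.Gamma (X - K + c) / Real.Gamma (X + c)) * r t
    with hqdef
  refine ⟨?_, hq⟩
  -- derivative of pih at 0
  have hInt : ∀ b : ℝ, IntervalIntegrable r MeasureTheory.volume t b :=
    fun b => hr_cont.intervalIntegrable _ _
  have hG0 : HasDerivAt (fun u => ∫ s in t..u, r s) (r t) (t + 0) := by
    rw [add_zero]
    exact intervalIntegral.integral_hasDerivAt_right (hInt t)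
      (hr_cont.stronglyMeasurable.stronglyMeasurableAtFilter) hr_cont.continuousAt
  have hF : HasDerivAt (fun h : ℝ => ∫ s in t..(t + h), r s) (r t) 0 := by
    have hf : HasDerivAt (fun h : ℝ => t + h) 1 0 := (hasDerivAt_id 0).const_add t
    exact (hG0.comp 0 hf).congr_deriv (mul_one _)
  have hI0 : (∫ s in t..(t + (0:ℝ)), r s) = 0 := by
    simp [intervalIntegral.integral_same]
  have hπ : HasDerivAt (pih r t) (r t) 0 := by
    have h1 : HasDerivAt (fun h : ℝ => Real.exp (-(∫ s in t..(t + h), r s)))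
        (Real.exp (-(∫ s in t..(t + (0:ℝ)), r s)) * -(r t)) 0 := hF.neg.exp
    have h2 := h1.const_sub 1
    exact (by simpa [hI0] using h2 : HasDerivAt (fun x => 1 - Real.exp (-∫ s in t..t + x, r s)) (r t) 0)
  have hπ0 : pih r t 0 = 0 := by simp [pih, hI0]
  have hπlt1 : ∀ h : ℝ, pih r t h < 1 := fun h => by
    have := Real.exp_pos (-(∫ s in t..(t + h), r s))
    simp only [pih]; linarith
  have hπpos : ∀ h : ℝ, 0 < h → 0 < pih r t h := by
    intro h hh
    have hint : 0 < ∫ s in t..(t + h), r s :=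
      intervalIntegral.intervalIntegral_pos_of_pos (hInt _) hr_pos (by linarith)
    have : Real.exp (-(∫ s in t..(t + h), r s)) < 1 := by
      rw [← Real.exp_zero]
      exact Real.exp_lt_exp.2 (by linarith)
    simp only [pih, sub_pos]; exact this
  -- pih → 0 and pih h / h → r t along 𝓝[>] 0
  have hπcont : Tendsto (pih r t) (𝓝[>] (0:ℝ)) (𝓝 0) := by
    have h1 := hπ.continuousAt.tendsto
    rw [hπ0] at h1
    exact h1.mono_left nhdsWithin_le_nhds
  have hslope : Tendsto (fun h => pih r t h / h) (𝓝[>] (0:ℝ)) (𝓝 (r t)) := by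
    have h1 := hasDerivAt_iff_tendsto_slope.mp hπ
    have h2 : Tendsto (slope (pih r t) 0) (𝓝[>] (0:ℝ)) (𝓝 (r t)) :=
      h1.mono_left (nhdsWithin_mono 0 (fun y hy => ne_of_gt hy))
    refine h2.congr' ?_
    filter_upwards [self_mem_nhdsWithin] with h hh
    simp [slope_def_field, hπ0]
  -- continuity of Gamma at positive points
  have hΓcont : ∀ {y : ℝ}, 0 < y → ContinuousAt Real.Gamma y := by
    intro y hy
    exact (Real.differentiableAt_Gamma (fun m =>
      ((lt_of_le_of_lt (neg_nonpos.mpr (Nat.cast_nonneg m)) hy).ne'))).continuousAt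
  -- the "regular part"
  set G : ℝ → ℝ := fun h => P * (Real.Gamma (K + c * pih r t h) *
      Real.Gamma (X - K + c * (1 - pih r t h)) * Real.Gamma c /
      (Real.Gamma (c * pih r t h + 1) * Real.Gamma (c * (1 - pih r t h)) *
        Real.Gamma (X + c))) with hGdef
  have hΓc := Real.Gamma_pos_of_pos hc
  have hGlim : Tendsto G (𝓝[>] (0:ℝ)) (𝓝 (P * (Real.Gamma K * Real.Gamma (X - K + c) /
      Real.Gamma (X + c)))) := by
    have tα : Tendsto (fun h => c * pih r t h) (𝓝[>] (0:ℝ)) (𝓝 0) := by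
      simpa using hπcont.const_mul c
    have tβ : Tendsto (fun h => c * (1 - pih r t h)) (𝓝[>] (0:ℝ)) (𝓝 c) := by
      have h' : Tendsto (fun h => (1:ℝ) - pih r t h) (𝓝[>] (0:ℝ)) (𝓝 1) := by
        simpa using Tendsto.sub (tendsto_const_nhds (x := (1:ℝ)) (f := 𝓝[>] (0:ℝ))) hπcont
      simpa using h'.const_mul c
    have t1 : Tendsto (fun h => Real.Gamma (K + c * pih r t h)) (𝓝[>] (0:ℝ))
        (𝓝 (Real.Gamma K)) := by
      have := (hΓcont hK0).tendsto.comp (by simpa using (tendsto_const_nhds.add tα))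
      exact this
    have t2 : Tendsto (fun h => Real.Gamma (X - K + c * (1 - pih r t h))) (𝓝[>] (0:ℝ))
        (𝓝 (Real.Gamma (X - K + c))) := by
      exact (hΓcont hXKc).tendsto.comp (tendsto_const_nhds.add tβ)
    have t3 : Tendsto (fun h => Real.Gamma (c * pih r t h + 1)) (𝓝[>] (0:ℝ))
        (𝓝 (Real.Gamma 1)) := by
      have := (hΓcont one_pos).tendsto.comp (by simpa using (tα.add tendsto_const_nhds))
      exact this
    have t4 : Tendsto (fun h => Real.Gamma (c * (1 - pih r t h))) (𝓝[>] (0:ℝ))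
        (𝓝 (Real.Gamma c)) := (hΓcont hc).tendsto.comp tβ
    have tall : Tendsto G (𝓝[>] (0:ℝ)) (𝓝 (P * (Real.Gamma K * Real.Gamma (X - K + c) *
        Real.Gamma c / (Real.Gamma 1 * Real.Gamma c * Real.Gamma (X + c))))) := by
      exact tendsto_const_nhds.mul (((t1.mul t2).mul tendsto_const_nhds).div
        (((t3.mul t4).mul tendsto_const_nhds))
        (by rw [Real.Gamma_one]; exact (mul_pos (mul_pos one_pos hΓc) hΓ2).ne'))
    convert tall using 2
    rw [Real.Gamma_one]
    field_simp
  -- main limit: pmf(h)/h → q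
  have hmain : Tendsto (fun h => mbbPmf m₁ x (c * pih r t h) (c * (1 - pih r t h)) k / h)
      (𝓝[>] (0:ℝ)) (𝓝 q) := by
    have heq : ∀ᶠ h in 𝓝[>] (0:ℝ),
        c * (pih r t h / h) * G h
          = mbbPmf m₁ x (c * pih r t h) (c * (1 - pih r t h)) k / h := by
      filter_upwards [self_mem_nhdsWithin] with h hh
      have hh' : (0:ℝ) < h := hh
      have hα : 0 < c * pih r t h := mul_pos hc (hπpos h hh')
      have hβ : 0 < c * (1 - pih r t h) := mul_pos hc (by linarith [hπlt1 h])
      have hαβ : c * pih r t h + c * (1 - pih r t h) = c := by ring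
      show c * (pih r t h / h) * G h = _
      rw [mbbPmf]
      rw [show (∑ i, (k i : ℝ)) = K from rfl, show (∑ i, (x i : ℝ)) = X from rfl,
        show (∏ i, ((x i).choose (k i) : ℝ)) = P from rfl]
      rw [betaFn_key K X c _ _ P hα hβ hc hαβ]
      rw [hGdef]
      field_simp
    have hlim : Tendsto (fun h => c * (pih r t h / h) * G h) (𝓝[>] (0:ℝ))
        (𝓝 (c * r t * (P * (Real.Gamma K * Real.Gamma (X - K + c) / Real.Gamma (X + c))))) :=
      (hslope.const_mul c).mul hGlim
    have hval : c * r t * (P * (Real.Gamma K * Real.Gamma (X - K + c) / Real.Gamma (X + c)))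
        = q := by rw [hqdef]; ring
    rw [hval] at hlim
    exact hlim.congr' heq
  -- conclude littleO
  rw [Asymptotics.isLittleO_iff_tendsto' (by
    filter_upwards [self_mem_nhdsWithin] with h hh h0
    exact absurd h0 (ne_of_gt hh))]
  have h1 : Tendsto (fun h => mbbPmf m₁ x (c * pih r t h) (c * (1 - pih r t h)) k / h - q)
      (𝓝[>] (0:ℝ)) (𝓝 (q - q)) := hmain.sub tendsto_const_nhds
  rw [sub_self] at h1
  refine h1.congr' ?_
  filter_upwards [self_mem_nhdsWithin] with h hh
  have hne : h ≠ 0 := ne_of_gt hh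
  rw [hqdef]
  field_simp
end
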